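/- arXiv:1806.05527 — 3 statements merged into one kernel-verified Lean document; each statement's English description precedes it below -/
import Mathlib

section
/- Let Γ be a finite connected multigraph, v0 a vertex of Γ, and μ a degree-d polarization on Γ. Then every degree-d divisor on Γ is equivalent (modulo principal divisors) to a unique (v0,μ)-quasistable degree-d divisor. -/
/-- A finite multigraph: each edge has two (possibly equal) endpoints
(loops and parallel edges are allowed). -/
structure Multigraph where
  V : Type
  E : Type
  [fV : Fintype V]
  [dV : DecidableEq V]
  [fE : Fintype E]
  [dE : DecidableEq E]
  ends1 : E → V
  ends2 : E → V

attribute [instance] Multigraph.fV Multigraph.dV Multigraph.fE Multigraph.dE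

namespace Multigraph

variable (G : Multigraph)

/-- The edge `e` joins the vertices `v` and `w`. -/
def Joins (e : G.E) (v w : G.V) : Prop :=
  (G.ends1 e = v ∧ G.ends2 e = w) ∨ (G.ends1 e = w ∧ G.ends2 e = v)

instance (e : G.E) (v w : G.V) : Decidable (G.Joins e v w) := by
  unfold Joins; infer_instance

/-- `E(A,B)`: the set of edges joining a vertex of `A ∖ B` to a vertex of `B ∖ A`. -/
def betweenSet (A B : Finset G.V) : Finset G.E :=
  Finset.univ.filter fun e => ∃ v ∈ A \ B, ∃ w ∈ B \ A, G.Joins e v w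

/-- `δ_A := |E(A, Aᶜ)|`. -/
def delta (A : Finset G.V) : ℕ := (G.betweenSet A Aᶜ).card

/-- One step along an edge belonging to `S`. -/
def Step (S : Set G.E) (v w : G.V) : Prop := ∃ e ∈ S, G.Joins e v w

/-- The spanning subgraph with edge set `S` is connected. -/
def ConnectedOn (S : Set G.E) : Prop :=
  ∀ v w : G.V, Relation.ReflTransGen (G.Step S) v w

def Connected : Prop := G.ConnectedOn Set.univ

/-- A spanning tree: a subset of edges making a connected spanning subgraph whose number
of edges equals the number of vertices minus one. -/
def IsSpanningTree (T : Finset G.E) : Prop :=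
  G.ConnectedOn ↑T ∧ T.card + 1 = Fintype.card G.V

/-- First Betti number of a connected graph. -/
def firstBetti : ℕ := Fintype.card G.E + 1 - Fintype.card G.V

/-- Degree of a divisor. -/
def deg (D : G.V → ℤ) : ℤ := ∑ v, D v

/-- A degree-`d` polarization. -/
def IsPolarization (μ : G.V → ℝ) (d : ℤ) : Prop := (∑ v, μ v) = (d : ℝ)

/-- `β_D(A) = deg(D|_A) - μ(A) + δ_A / 2`. -/
noncomputable def beta (μ : G.V → ℝ) (D : G.V → ℤ) (A : Finset G.V) : ℝ :=
  (∑ v ∈ A, (D v : ℝ)) - (∑ v ∈ A, μ v) + (G.delta A : ℝ) / 2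

/-- `D` is `(v0,μ)`-quasistable: `β_D(A) ≥ 0` for every proper subset `A` of the vertices,
with strict inequality whenever `v0 ∈ A`. -/
def Quasistable (μ : G.V → ℝ) (v0 : G.V) (D : G.V → ℤ) : Prop :=
  ∀ A : Finset G.V, A ⊂ Finset.univ →
    0 ≤ G.beta μ D A ∧ (v0 ∈ A → 0 < G.beta μ D A)

/-- Number of incidences of `v` with edges in `S` (loops counted twice). -/
def valIn (S : Finset G.E) (v : G.V) : ℕ :=
  ∑ e ∈ S, ((if G.ends1 e = v then 1 else 0) + (if G.ends2 e = v then 1 else 0))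

/-- Valence of a vertex (loops counted twice). -/
def val (v : G.V) : ℕ := G.valIn Finset.univ v

/-- The vertices of the `S`-subdivision: original vertices plus one exceptional vertex
for each edge in `S`. -/
abbrev subV (S : Finset G.E) : Type := G.V ⊕ {e : G.E // e ∈ S}

/-- The `S`-subdivision of `G`: each edge `e ∈ S` is replaced by two edges meeting at a new
exceptional vertex. -/
def subdiv (S : Finset G.E) : Multigraph where
  V := G.subV S
  E := {e : G.E // e ∉ S} ⊕ ({e : G.E // e ∈ S} × Bool)
  ends1 := fun e => match e with
    | Sum.inl x => Sum.inl (G.ends1 x.1)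
    | Sum.inr (x, false) => Sum.inl (G.ends1 x.1)
    | Sum.inr (x, true) => Sum.inr x
  ends2 := fun e => match e with
    | Sum.inl x => Sum.inl (G.ends2 x.1)
    | Sum.inr (x, false) => Sum.inr x
    | Sum.inr (x, true) => Sum.inl (G.ends2 x.1)

/-- The polarization `μ^S` on the `S`-subdivision: `μ` on old vertices, `0` on
exceptional vertices. -/
noncomputable def subPol (S : Finset G.E) (μ : G.V → ℝ) : G.subV S → ℝ :=
  Sum.elim μ fun _ => 0

/-- A divisor on the `S`-subdivision is a pseudo-divisor when it takes value `-1` at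
every exceptional vertex. -/
def IsPseudoDivisor (S : Finset G.E) (D : G.subV S → ℤ) : Prop :=
  ∀ x : {e : G.E // e ∈ S}, D (Sum.inr x) = -1

/-- `(S,D)` is a `(v0,μ)`-quasistable degree-`d` pseudo-divisor on `G`. -/
def QSPseudo (μ : G.V → ℝ) (v0 : G.V) (d : ℤ) (S : Finset G.E)
    (D : G.subV S → ℤ) : Prop :=
  G.IsPseudoDivisor S D ∧ (∑ v, D v) = d ∧
    (G.subdiv S).Quasistable (G.subPol S μ) (Sum.inl v0) D

/-- The graph obtained by deleting the edges in `S`. -/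
def deleteEdges (S : Finset G.E) : Multigraph where
  V := G.V
  E := {e : G.E // e ∉ S}
  ends1 := fun e => G.ends1 e.1
  ends2 := fun e => G.ends2 e.1

/-- A pseudo-divisor on `G`: a subset of edges together with a divisor on the associated
subdivision. -/
def PD : Type := Σ S : Finset G.E, (G.subV S → ℤ)

variable {G}

/-- The specialization (partial) order on pseudo-divisors on a fixed graph:
`PDLe x y` holds when `y` specializes to `x`, i.e. `x.1 ⊆ y.1` and there is a
specialization `Γ^{y.1} → Γ^{x.1}` compatible with the identity of `Γ` (each exceptional
vertex over an edge of `y.1 ∖ x.1` is merged into one of the two endpoints of that edge)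
carrying `y.2` to `x.2`. -/
def PDLe (x y : G.PD) : Prop :=
  ∃ h : x.1 ⊆ y.1, ∃ c : G.E → G.V,
    (∀ e ∈ y.1 \ x.1, c e = G.ends1 e ∨ c e = G.ends2 e) ∧
    (∀ v : G.V, x.2 (Sum.inl v) =
      y.2 (Sum.inl v) + ∑ e ∈ (y.1 \ x.1).attach,
        (if c e.1 = v then y.2 (Sum.inr ⟨e.1, (Finset.mem_sdiff.mp e.2).1⟩) else 0)) ∧
    (∀ (e : G.E) (hx : e ∈ x.1), x.2 (Sum.inr ⟨e, hx⟩) = y.2 (Sum.inr ⟨e, h hx⟩))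

/-- Strict specialization order on pseudo-divisors. -/
def PDLt (x y : G.PD) : Prop := PDLe x y ∧ x ≠ y

variable (G)

/-- The set `QD_{v0,μ}(G)` of `(v0,μ)`-quasistable degree-`d` pseudo-divisors on `G`. -/
def QDSet (μ : G.V → ℝ) (v0 : G.V) (d : ℤ) : Set G.PD :=
  {x | G.QSPseudo μ v0 d x.1 x.2}

end Multigraph

/-- A specialization `G → G'` of multigraphs: the contraction of a subset of the edges of
`G`. It is encoded by the map `vmap` on vertices and the identification `emap` of the
edges of `G'` with the non-contracted edges of `G`; the fibers of `vmap` are exactly the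
connected components spanned by contracted edges. -/
structure Multigraph.Spec (G G' : Multigraph) where
  vmap : G.V → G'.V
  emap : G'.E → G.E
  emap_inj : Function.Injective emap
  vmap_surj : Function.Surjective vmap
  joins_comm : ∀ e' : G'.E,
    G'.Joins e' (vmap (G.ends1 (emap e'))) (vmap (G.ends2 (emap e')))
  glue : ∀ e : G.E, (¬ ∃ e', emap e' = e) → vmap (G.ends1 e) = vmap (G.ends2 e)
  fiber_conn : ∀ v w : G.V, vmap v = vmap w →
    Relation.ReflTransGen
      (fun a b => ∃ e : G.E, (¬ ∃ e', emap e' = e) ∧ G.Joins e a b) v w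

namespace Multigraph.Spec

variable {G G' : Multigraph} (f : Multigraph.Spec G G')

/-- The set of edges contracted by the specialization. -/
def contracted : Finset G.E := Finset.univ.filter fun e => ¬ ∃ e', f.emap e' = e

/-- Pushforward of a polarization. -/
noncomputable def pushPol (μ : G.V → ℝ) : G'.V → ℝ := fun v' => ∑ v, if f.vmap v = v' then μ v else 0

/-- Pushforward of a divisor. -/
def pushDiv (D : G.V → ℤ) : G'.V → ℤ := fun v' => ∑ v, if f.vmap v = v' then D v else 0

/-- The edge set `S ∩ E(G')` of the pushforward of a pseudo-divisor `(S,D)`. -/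
def pushEdges (S : Finset G.E) : Finset G'.E :=
  Finset.univ.filter fun e' => f.emap e' ∈ S

/-- Pushforward of the divisor part of a pseudo-divisor `(S,D)` along the induced
specialization `G^S → G'^{S ∩ E(G')}`. -/
def pushPDFun (S : Finset G.E) (D : G.subV S → ℤ) :
    G'.subV (f.pushEdges S) → ℤ
  | Sum.inl v' => (∑ v, if f.vmap v = v' then D (Sum.inl v) else 0) +
      ∑ e ∈ S.attach,
        (if e.1 ∈ f.contracted ∧ f.vmap (G.ends1 e.1) = v' then D (Sum.inr e) else 0)
  | Sum.inr x => D (Sum.inr ⟨f.emap x.1, (Finset.mem_filter.mp x.2).2⟩)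

/-- Pushforward of a pseudo-divisor along a specialization. -/
def pushPD (x : G.PD) : G'.PD := ⟨f.pushEdges x.1, f.pushPDFun x.1 x.2⟩

end Multigraph.Spec

open Multigraph

namespace Multigraph

/-- The principal divisor `Δf` associated to `f : V → ℤ`: at `v`, the sum over all
non-loop edges incident to `v` (counted with multiplicity) of `f(v) - f(v_e)`, where
`v_e` is the other endpoint (loops contribute `0`). -/
def prin (G : Multigraph) (f : G.V → ℤ) : G.V → ℤ := fun v =>
  ∑ e : G.E,
    ((if G.ends1 e = v then f v - f (G.ends2 e) else 0) +
      (if G.ends2 e = v then f v - f (G.ends1 e) else 0))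

end Multigraph
namespace QSAux
open Multigraph
variable {G : Multigraph}

def ind (A : Finset G.V) : G.V → ℤ := fun v => if v ∈ A then 1 else 0

lemma joins_symm {e : G.E} {v w : G.V} (h : G.Joins e v w) : G.Joins e w v := by
  unfold Multigraph.Joins at *; tauto

lemma pairing (f g : G.V → ℤ) :
    ∑ v, g v * G.prin f v
      = ∑ e, (f (G.ends1 e) - f (G.ends2 e)) * (g (G.ends1 e) - g (G.ends2 e)) := by
  simp only [Multigraph.prin, Finset.mul_sum]
  rw [Finset.sum_comm]
  refine Finset.sum_congr rfl fun e _ => ?_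
  simp only [mul_add, mul_ite, mul_zero, Finset.sum_add_distrib, Finset.sum_ite_eq,
    Finset.mem_univ, if_true]
  ring

lemma prin_sum_zero (f : G.V → ℤ) : ∑ v, G.prin f v = 0 := by
  have := pairing f (fun _ => 1)
  simpa using this

lemma prin_sub (a b : G.V → ℤ) (v : G.V) :
    G.prin (fun w => a w - b w) v = G.prin a v - G.prin b v := by
  unfold Multigraph.prin
  rw [← Finset.sum_sub_distrib]
  refine Finset.sum_congr rfl fun e _ => ?_
  by_cases h1 : G.ends1 e = v <;> by_cases h2 : G.ends2 e = v <;> simp [h1, h2] <;> ring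

end QSAux
namespace QSAux
open Multigraph
variable {G : Multigraph}

lemma delta_compl (A : Finset G.V) : G.delta Aᶜ = G.delta A := by
  unfold Multigraph.delta Multigraph.betweenSet
  rw [compl_compl]
  congr 1
  refine Finset.filter_congr fun e _ => ?_
  constructor
  · rintro ⟨v, hv, w, hw, h⟩; exact ⟨w, hw, v, hv, joins_symm h⟩
  · rintro ⟨v, hv, w, hw, h⟩; exact ⟨w, hw, v, hv, joins_symm h⟩

lemma delta_eq_sum (A : Finset G.V) :
    (G.delta A : ℤ) = ∑ e, (ind A (G.ends1 e) - ind A (G.ends2 e))^2 := by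
  unfold Multigraph.delta Multigraph.betweenSet
  rw [Finset.card_filter]
  push_cast
  refine Finset.sum_congr rfl fun e _ => ?_
  by_cases h1 : G.ends1 e ∈ A <;> by_cases h2 : G.ends2 e ∈ A <;>
    simp only [ind, h1, h2, if_true, if_false]
  · rw [if_neg]; · ring
    rintro ⟨v, hv, w, hw, (⟨rfl, rfl⟩ | ⟨rfl, rfl⟩)⟩ <;>
      simp [Finset.mem_sdiff, Finset.mem_compl, h1, h2] at hv hw
  · rw [if_pos]; · ring
    exact ⟨G.ends1 e, by simp [h1], G.ends2 e, by simp [h2], Or.inl ⟨rfl, rfl⟩⟩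
  · rw [if_pos]; · ring
    exact ⟨G.ends2 e, by simp [h2], G.ends1 e, by simp [h1], Or.inr ⟨rfl, rfl⟩⟩
  · rw [if_neg]; · ring
    rintro ⟨v, hv, w, hw, (⟨rfl, rfl⟩ | ⟨rfl, rfl⟩)⟩ <;>
      simp [Finset.mem_sdiff, Finset.mem_compl, h1, h2] at hv hw

end QSAux
namespace QSAux
open Multigraph
variable {G : Multigraph}

/-- The energy functional. -/
noncomputable def Fen (G : Multigraph) (c : G.V → ℝ) (f : G.V → ℤ) : ℝ :=
  (∑ e, ((f (G.ends1 e) : ℝ) - (f (G.ends2 e) : ℝ))^2) - 2 * ∑ v, c v * (f v : ℝ)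

lemma Fen_zero (c : G.V → ℝ) : Fen G c (fun _ => 0) = 0 := by simp [Fen]

lemma Fen_add_const (c : G.V → ℝ) (hc : ∑ v, c v = 0) (f : G.V → ℤ) (k : ℤ) :
    Fen G c (fun v => f v + k) = Fen G c f := by
  unfold Fen
  have h1 : ∑ e, (((f (G.ends1 e) + k : ℤ) : ℝ) - ((f (G.ends2 e) + k : ℤ) : ℝ))^2
      = ∑ e, ((f (G.ends1 e) : ℝ) - (f (G.ends2 e) : ℝ))^2 := by
    refine Finset.sum_congr rfl fun e _ => ?_; push_cast; ring
  have h2 : ∑ v, c v * ((f v + k : ℤ) : ℝ)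
      = (∑ v, c v * (f v : ℝ)) + (∑ v, c v) * (k : ℝ) := by
    rw [Finset.sum_mul, ← Finset.sum_add_distrib]
    refine Finset.sum_congr rfl fun v _ => ?_; push_cast; ring
  rw [h1, h2, hc]; ring

lemma quad_expand (f g : G.V → ℤ) :
    ∑ e, ((f (G.ends1 e) + g (G.ends1 e)) - (f (G.ends2 e) + g (G.ends2 e)))^2
      = (∑ e, (f (G.ends1 e) - f (G.ends2 e))^2) + 2 * (∑ v, g v * G.prin f v)
        + ∑ e, (g (G.ends1 e) - g (G.ends2 e))^2 := by
  rw [pairing, Finset.mul_sum, ← Finset.sum_add_distrib, ← Finset.sum_add_distrib]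
  exact Finset.sum_congr rfl fun e _ => by ring

lemma sum_ind_mul (A : Finset G.V) (x : G.V → ℤ) :
    ∑ v, ind A v * x v = ∑ v ∈ A, x v := by
  simp only [ind, ite_mul, one_mul, zero_mul]
  rw [Finset.sum_ite_mem, Finset.univ_inter]

lemma Fen_change (μ : G.V → ℝ) (D : G.V → ℤ) (hc : ∑ v, ((D v : ℝ) - μ v) = 0)
    (f : G.V → ℤ) (B : Finset G.V) :
    Fen G (fun v => (D v : ℝ) - μ v) (fun v => f v + ind Bᶜ v)
      = Fen G (fun v => (D v : ℝ) - μ v) f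
        + 2 * G.beta μ (fun v => D v - G.prin f v) B := by
  have cast1 : ∀ (h : G.V → ℤ), (∑ e, ((h (G.ends1 e) : ℝ) - (h (G.ends2 e) : ℝ))^2)
      = ((∑ e, (h (G.ends1 e) - h (G.ends2 e))^2 : ℤ) : ℝ) := by
    intro h; push_cast; rfl
  have hq := quad_expand f (ind Bᶜ)
  have hd := delta_eq_sum (G := G) Bᶜ
  have hp := sum_ind_mul Bᶜ (G.prin f)
  -- integer quadratic identity
  have hz : (∑ e, ((fun v => f v + ind Bᶜ v) (G.ends1 e)
        - (fun v => f v + ind Bᶜ v) (G.ends2 e))^2 : ℤ)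
      = (∑ e, (f (G.ends1 e) - f (G.ends2 e))^2) + 2 * (∑ v ∈ Bᶜ, G.prin f v)
        + (G.delta Bᶜ : ℤ) := by
    simp only [] at hq ⊢
    rw [hq, hp, hd]
  -- linear part
  have hlin : ∑ v, ((D v : ℝ) - μ v) * (((fun v => f v + ind Bᶜ v) v : ℤ) : ℝ)
      = (∑ v, ((D v : ℝ) - μ v) * (f v : ℝ)) + ∑ v ∈ Bᶜ, ((D v : ℝ) - μ v) := by
    have h : ∀ v : G.V, ((D v : ℝ) - μ v) * (((f v + ind Bᶜ v : ℤ)) : ℝ)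
        = ((D v : ℝ) - μ v) * (f v : ℝ) + (if v ∈ Bᶜ then ((D v : ℝ) - μ v) else 0) := by
      intro v; simp only [ind]; split <;> push_cast <;> ring
    simp only []
    rw [Finset.sum_congr rfl (fun v _ => h v), Finset.sum_add_distrib,
      Finset.sum_ite_mem, Finset.univ_inter]
  -- relating sums over Bᶜ and B
  have hPf0 : (∑ v, ((G.prin f v : ℤ) : ℝ)) = 0 := by
    rw [← Int.cast_sum, prin_sum_zero]; simp
  have hsB : ∑ v ∈ Bᶜ, (((G.prin f v : ℤ) : ℝ) - ((D v : ℝ) - μ v))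
      = ∑ v ∈ B, (((D v : ℝ) - μ v) - ((G.prin f v : ℤ) : ℝ)) := by
    have h0 : ∑ v, (((G.prin f v : ℤ) : ℝ) - ((D v : ℝ) - μ v)) = 0 := by
      rw [Finset.sum_sub_distrib, hPf0, hc]; ring
    have h1 := Finset.sum_add_sum_compl B
      (fun v => (((G.prin f v : ℤ) : ℝ) - ((D v : ℝ) - μ v)))
    rw [h0] at h1
    have h2 : ∑ v ∈ B, (((D v : ℝ) - μ v) - ((G.prin f v : ℤ) : ℝ))
        = - ∑ v ∈ B, (((G.prin f v : ℤ) : ℝ) - ((D v : ℝ) - μ v)) := by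
      rw [← Finset.sum_neg_distrib]
      exact Finset.sum_congr rfl fun v _ => by ring
    linarith [h1, h2]
  -- assemble
  unfold Fen Multigraph.beta
  rw [cast1 (fun v => f v + ind Bᶜ v), cast1 f, hz, hlin, delta_compl]
  push_cast
  rw [show ∑ v ∈ Bᶜ, (((G.prin f v : ℤ) : ℝ) - ((D v : ℝ) - μ v))
      = (∑ v ∈ Bᶜ, ((G.prin f v : ℤ) : ℝ)) - ∑ v ∈ Bᶜ, ((D v : ℝ) - μ v) from
    Finset.sum_sub_distrib _ _] at hsB
  rw [show ∑ v ∈ B, (((D v : ℝ) - μ v) - ((G.prin f v : ℤ) : ℝ))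
      = (∑ v ∈ B, ((D v : ℝ) - μ v)) - ∑ v ∈ B, ((G.prin f v : ℤ) : ℝ) from
    Finset.sum_sub_distrib _ _] at hsB
  rw [show ∑ v ∈ B, ((D v : ℝ) - μ v) = (∑ v ∈ B, (D v : ℝ)) - ∑ v ∈ B, μ v from
    Finset.sum_sub_distrib _ _] at hsB
  have hsplit : ∑ x ∈ B, ((D x : ℝ) - (G.prin f x : ℝ))
      = (∑ x ∈ B, (D x : ℝ)) - ∑ x ∈ B, (G.prin f x : ℝ) := Finset.sum_sub_distrib _ _
  linarith [hsB, hsplit]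

end QSAux
namespace QSAux
open Multigraph
variable {G : Multigraph}

lemma exists_crossing_edge (A : Finset G.V) {v w : G.V}
    (h : Relation.ReflTransGen (G.Step Set.univ) v w) (hv : v ∈ A) (hw : w ∉ A) :
    ∃ a ∈ A, ∃ b, b ∉ A ∧ ∃ e, G.Joins e a b := by
  induction h with
  | refl => exact absurd hv hw
  | @tail b c hc hs ih =>
    by_cases hb : b ∈ A
    · obtain ⟨e, _, he⟩ := hs
      exact ⟨b, hb, c, hw, e, he⟩
    · exact ih hb

lemma norm_bound (hconn : G.Connected) (f : G.V → ℤ) (v0 : G.V) (hf0 : f v0 = 0)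
    (r : ℝ) (hr : 0 ≤ r)
    (hedge : ∀ e, |(f (G.ends1 e) : ℝ) - (f (G.ends2 e) : ℝ)| ≤ r) (v : G.V) :
    |(f v : ℝ)| ≤ ((Fintype.card G.V - 1 : ℕ) : ℝ) * r := by
  classical
  set n := Fintype.card G.V with hn
  have hn1 : 1 ≤ n := Fintype.card_pos_iff.mpr ⟨v0⟩
  set A : ℕ → Finset G.V := fun k => Finset.univ.filter (fun v => |(f v : ℝ)| ≤ (k : ℝ) * r)
    with hA
  have hmono : ∀ k, A k ⊆ A (k+1) := by
    intro k x hx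
    simp only [hA, Finset.mem_filter, Finset.mem_univ, true_and] at hx ⊢
    have : (k : ℝ) * r ≤ ((k:ℝ)+1) * r := by nlinarith
    push_cast
    linarith
  have hv0 : ∀ k, v0 ∈ A k := by
    intro k
    simp only [hA, Finset.mem_filter, Finset.mem_univ, true_and, hf0, Int.cast_zero,
      abs_zero]
    positivity
  have key : ∀ k : ℕ, min n (k+1) ≤ (A k).card := by
    intro k
    induction k with
    | zero =>
      have h1 : 1 ≤ (A 0).card := Finset.card_pos.mpr ⟨v0, hv0 0⟩
      exact le_trans (min_le_right _ _) h1
    | succ k ih =>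
      by_cases hAu : A k = Finset.univ
      · have : A (k+1) = Finset.univ := Finset.eq_univ_of_forall fun x =>
          hmono k (hAu ▸ Finset.mem_univ x)
        rw [this, Finset.card_univ]
        omega
      · obtain ⟨w, hw⟩ : ∃ w, w ∉ A k := by
          by_contra hcon
          push_neg at hcon
          exact hAu (Finset.eq_univ_of_forall hcon)
        obtain ⟨a, ha, b, hb, e, he⟩ :=
          exists_crossing_edge (A k) (hconn v0 w) (hv0 k) hw
        have hab : |(f a : ℝ) - (f b : ℝ)| ≤ r := by
          rcases he with ⟨h1, h2⟩ | ⟨h1, h2⟩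
          · rw [← h1, ← h2]; exact hedge e
          · rw [← h1, ← h2, abs_sub_comm]; exact hedge e
        have hbmem : b ∈ A (k+1) := by
          simp only [hA, Finset.mem_filter, Finset.mem_univ, true_and] at ha ⊢
          have h3 : |(f b : ℝ)| ≤ |(f a : ℝ)| + r := by
            have := abs_sub_abs_le_abs_sub (f b : ℝ) (f a : ℝ)
            rw [abs_sub_comm] at hab
            linarith
          push_cast
          linarith
        have hsub : insert b (A k) ⊆ A (k+1) := by
          intro x hx
          rcases Finset.mem_insert.mp hx with rfl | hx
          · exact hbmem
          · exact hmono k hx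
        have hcard : (A k).card + 1 ≤ (A (k+1)).card := by
          have := Finset.card_le_card hsub
          rwa [Finset.card_insert_of_notMem hb] at this
        omega
  have hfin : A (n - 1) = Finset.univ := by
    have h1 := key (n - 1)
    have h2 : (A (n-1)).card ≤ n := by
      rw [hn]; exact Finset.card_le_univ _
    have : (A (n-1)).card = n := by omega
    exact Finset.eq_univ_of_card _ (this.trans hn)
  have := hfin ▸ Finset.mem_univ v
  simp only [hA, Finset.mem_filter, Finset.mem_univ, true_and] at this
  exact this

end QSAux
namespace QSAux
open Multigraph
variable {G : Multigraph}

lemma coercive (hconn : G.Connected) (c : G.V → ℝ) (f : G.V → ℤ) (v0 : G.V)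
    (hf0 : f v0 = 0) (hF : Fen G c f ≤ 0) (v : G.V) :
    |(f v : ℝ)| ≤ 2 * (∑ w, |c w|) * ((Fintype.card G.V - 1 : ℕ) : ℝ)^2 := by
  set C := ∑ w, |c w| with hC
  have hC0 : 0 ≤ C := Finset.sum_nonneg fun w _ => abs_nonneg _
  set EnR := ∑ e, ((f (G.ends1 e) : ℝ) - (f (G.ends2 e) : ℝ))^2 with hEnR
  have hEn0 : 0 ≤ EnR := Finset.sum_nonneg fun e _ => sq_nonneg _
  set r := Real.sqrt EnR with hrdef
  have hr0 : 0 ≤ r := Real.sqrt_nonneg _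
  have hedge : ∀ e, |(f (G.ends1 e) : ℝ) - (f (G.ends2 e) : ℝ)| ≤ r := by
    intro e
    have h1 : ((f (G.ends1 e) : ℝ) - (f (G.ends2 e) : ℝ))^2 ≤ EnR := by
      rw [hEnR]
      exact Finset.single_le_sum
        (f := fun e => ((f (G.ends1 e) : ℝ) - (f (G.ends2 e) : ℝ))^2)
        (fun e _ => sq_nonneg _) (Finset.mem_univ e)
    calc |(f (G.ends1 e) : ℝ) - (f (G.ends2 e) : ℝ)|
        = Real.sqrt (((f (G.ends1 e) : ℝ) - (f (G.ends2 e) : ℝ))^2) :=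
          (Real.sqrt_sq_eq_abs _).symm
      _ ≤ r := Real.sqrt_le_sqrt h1
  set N := ((Fintype.card G.V - 1 : ℕ) : ℝ) with hN
  have hN0 : 0 ≤ N := by positivity
  have hbd : ∀ w, |(f w : ℝ)| ≤ N * r := norm_bound hconn f v0 hf0 r hr0 hedge
  -- from hF : EnR ≤ 2 * ∑ c v f v
  have hlin : ∑ w, c w * (f w : ℝ) ≤ C * (N * r) := by
    calc ∑ w, c w * (f w : ℝ) ≤ ∑ w, |c w| * (N * r) := by
          refine Finset.sum_le_sum fun w _ => ?_
          calc c w * (f w : ℝ) ≤ |c w * (f w : ℝ)| := le_abs_self _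
            _ = |c w| * |(f w : ℝ)| := abs_mul _ _
            _ ≤ |c w| * (N * r) := by
                exact mul_le_mul_of_nonneg_left (hbd w) (abs_nonneg _)
      _ = C * (N * r) := by rw [← Finset.sum_mul]
  have hEr : EnR ≤ 2 * (C * (N * r)) := by
    have : EnR - 2 * ∑ w, c w * (f w : ℝ) ≤ 0 := hF
    linarith
  have hr2 : r^2 = EnR := Real.sq_sqrt hEn0
  have hrle : r ≤ 2 * C * N := by
    rcases eq_or_lt_of_le hr0 with h | h
    · rw [← h]; positivity
    · have h2 : r * r ≤ (2 * C * N) * r := by nlinarith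
      exact le_of_mul_le_mul_right h2 h
  calc |(f v : ℝ)| ≤ N * r := hbd v
    _ ≤ N * (2 * C * N) := mul_le_mul_of_nonneg_left hrle hN0
    _ = 2 * C * N^2 := by ring

/-- Uniqueness of quasistable representatives. -/
lemma quasi_unique (G : Multigraph) (μ : G.V → ℝ) (d : ℤ) (hμ : G.IsPolarization μ d)
    (v0 : G.V) (D1 D2 : G.V → ℤ) (h1 : G.deg D1 = d) (h2 : G.deg D2 = d)
    (q1 : G.Quasistable μ v0 D1) (q2 : G.Quasistable μ v0 D2)
    (h : G.V → ℤ) (hh : ∀ v, D1 v - D2 v = G.prin h v) : D1 = D2 := by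
  classical
  by_cases hcon : ∀ v w : G.V, h v = h w
  · -- h constant, prin h = 0
    funext v
    have : G.prin h v = 0 := by
      unfold Multigraph.prin
      refine Finset.sum_eq_zero fun e _ => ?_
      have e1 := hcon v (G.ends2 e)
      have e2 := hcon v (G.ends1 e)
      by_cases ha : G.ends1 e = v <;> by_cases hb : G.ends2 e = v <;>
        simp [ha, hb, e1, e2] <;> omega
    have := hh v
    omega
  · push_neg at hcon
    obtain ⟨x, y, hxy⟩ := hcon
    -- the set where h is maximal
    obtain ⟨vm, _, hvm⟩ := Finset.exists_max_image Finset.univ h ⟨x, Finset.mem_univ x⟩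
    set M := h vm with hM
    set A : Finset G.V := Finset.univ.filter (fun v => h v = M) with hA
    have hAmem : ∀ v, v ∈ A ↔ h v = M := by
      intro v; simp [hA]
    have hAne : A.Nonempty := ⟨vm, (hAmem vm).mpr rfl⟩
    have hAproper : A ≠ Finset.univ := by
      intro hcontra
      rcases lt_trichotomy (h x) (h y) with hlt | heq | hlt
      · have := (hAmem x).mp (hcontra ▸ Finset.mem_univ x)
        have := (hAmem y).mp (hcontra ▸ Finset.mem_univ y)
        omega
      · exact hxy heq
      · have := (hAmem x).mp (hcontra ▸ Finset.mem_univ x)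
        have := (hAmem y).mp (hcontra ▸ Finset.mem_univ y)
        omega
    -- key inequality: ∑_{v∈A} prin h v ≥ δ_A
    have hkey : (G.delta A : ℤ) ≤ ∑ v ∈ A, G.prin h v := by
      rw [← sum_ind_mul A (G.prin h), pairing h (ind A), delta_eq_sum A]
      refine Finset.sum_le_sum fun e _ => ?_
      set a := G.ends1 e
      set b := G.ends2 e
      have hma : h a ≤ M := hvm a (Finset.mem_univ a)
      have hmb : h b ≤ M := hvm b (Finset.mem_univ b)
      by_cases haA : a ∈ A <;> by_cases hbA : b ∈ A <;>
        simp only [ind, haA, hbA, if_true, if_false]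
      · ring_nf; omega
      · have ha' : h a = M := (hAmem a).mp haA
        have hb' : h b ≠ M := fun hcontra => hbA ((hAmem b).mpr hcontra)
        have : h b ≤ M - 1 := by omega
        nlinarith
      · have hb' : h b = M := (hAmem b).mp hbA
        have ha' : h a ≠ M := fun hcontra => haA ((hAmem a).mpr hcontra)
        have : h a ≤ M - 1 := by omega
        nlinarith
      · ring_nf; omega
    exfalso
    -- β_{D1}(A) ≥ β_{D2}(A) + δ_A  and  β_{D1}(A) + β_{D1}(Aᶜ) = δ_A
    have hAsub : A ⊂ Finset.univ := (Finset.ssubset_univ_iff).mpr hAproper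
    have hAcsub : Aᶜ ⊂ Finset.univ := by
      rw [Finset.ssubset_univ_iff]
      intro hcontra
      obtain ⟨a, ha⟩ := hAne
      have : a ∈ Aᶜ := hcontra ▸ Finset.mem_univ a
      exact (Finset.mem_compl.mp this) ha
    have hbd : ∀ (DD : G.V → ℤ), G.deg DD = d →
        G.beta μ DD A + G.beta μ DD Aᶜ = (G.delta A : ℝ) := by
      intro DD hdeg
      unfold Multigraph.beta
      have hs1 : (∑ v ∈ A, (DD v : ℝ)) + ∑ v ∈ Aᶜ, (DD v : ℝ) = (d : ℝ) := by
        rw [Finset.sum_add_sum_compl]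
        rw [show (∑ v, (DD v : ℝ)) = ((G.deg DD : ℤ) : ℝ) from ?_, hdeg]
        unfold Multigraph.deg
        push_cast
        rfl
      have hs2 : (∑ v ∈ A, μ v) + ∑ v ∈ Aᶜ, μ v = (d : ℝ) := by
        rw [Finset.sum_add_sum_compl]; exact hμ
      rw [delta_compl]
      linarith
    have hdiff : G.beta μ D2 A + (G.delta A : ℝ) ≤ G.beta μ D1 A := by
      unfold Multigraph.beta
      have hsum : (∑ v ∈ A, (D1 v : ℝ)) = (∑ v ∈ A, (D2 v : ℝ)) + ((∑ v ∈ A, G.prin h v : ℤ) : ℝ) := by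
        push_cast
        rw [← Finset.sum_add_distrib]
        refine Finset.sum_congr rfl fun v _ => ?_
        have := hh v
        push_cast
        have h2 : (D1 v : ℝ) - D2 v = (G.prin h v : ℝ) := by exact_mod_cast this
        linarith
      have hcast : (G.delta A : ℝ) ≤ ((∑ v ∈ A, G.prin h v : ℤ) : ℝ) := by exact_mod_cast hkey
      linarith
    have hq1A := q1 A hAsub
    have hq1Ac := q1 Aᶜ hAcsub
    have hq2A := q2 A hAsub
    have hq2Ac := q2 Aᶜ hAcsub
    have heither := hbd D1 h1
    by_cases hv0 : v0 ∈ A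
    · have := hq2A.2 hv0
      linarith [hq1Ac.1]
    · have hv0c : v0 ∈ Aᶜ := Finset.mem_compl.mpr hv0
      have := hq1Ac.2 hv0c
      linarith [hq2A.1]

end QSAux

open QSAux

/-- Every degree-`d` divisor on a finite connected multigraph is
equivalent, modulo principal divisors, to a unique `(v0,μ)`-quasistable degree-`d`
divisor. -/
theorem exists_unique_quasistable_representative (G : Multigraph) (hconn : G.Connected)
    (d : ℤ) (μ : G.V → ℝ) (hμ : G.IsPolarization μ d) (v0 : G.V)
    (D : G.V → ℤ) (hD : G.deg D = d) :
    ∃! D' : G.V → ℤ, G.deg D' = d ∧ G.Quasistable μ v0 D' ∧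
      ∃ f : G.V → ℤ, ∀ v, D v - D' v = G.prin f v := by
  classical
  have hc : ∑ v, ((D v : ℝ) - μ v) = 0 := by
    rw [Finset.sum_sub_distrib]
    have h1 : (∑ v, (D v : ℝ)) = (d : ℝ) := by
      rw [show (∑ v, (D v : ℝ)) = ((∑ v, D v : ℤ) : ℝ) by push_cast; rfl]
      exact_mod_cast congrArg (fun z : ℤ => (z : ℝ)) hD
    rw [h1, hμ]
    ring
  set Breal : ℝ := 2 * (∑ w, |(D w : ℝ) - μ w|) * ((Fintype.card G.V - 1 : ℕ) : ℝ)^2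
    with hBreal
  have hB0 : 0 ≤ Breal := by
    rw [hBreal]
    have : 0 ≤ ∑ w, |(D w : ℝ) - μ w| := Finset.sum_nonneg fun w _ => abs_nonneg _
    positivity
  set M0 : ℤ := ⌈Breal⌉ with hM0
  set box : Finset (G.V → ℤ) := Finset.Icc (fun _ => -M0) (fun _ => M0) with hboxdef
  have hbox : ∀ g : G.V → ℤ, (∀ v, |(g v : ℝ)| ≤ Breal) → g ∈ box := by
    intro g hg
    rw [hboxdef, Finset.mem_Icc]
    constructor <;> intro v
    · have := (abs_le.mp (hg v)).1
      have h2 : -(M0 : ℝ) ≤ (g v : ℝ) := le_trans (by simpa using neg_le_neg (Int.le_ceil Breal)) this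
      exact_mod_cast h2
    · have := (abs_le.mp (hg v)).2
      have h2 : (g v : ℝ) ≤ (M0 : ℝ) := le_trans this (Int.le_ceil Breal)
      exact_mod_cast h2
  have hcoerce : ∀ g : G.V → ℤ, g v0 = 0 →
      Fen G (fun v => (D v : ℝ) - μ v) g ≤ 0 → g ∈ box := by
    intro g h0 hF
    exact hbox g fun v => coercive hconn (fun v => (D v : ℝ) - μ v) g v0 h0 hF v
  set S0 : Finset (G.V → ℤ) := box.filter (fun g => g v0 = 0) with hS0def
  have h0S0 : (fun _ => (0:ℤ)) ∈ S0 := by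
    rw [hS0def, Finset.mem_filter]
    exact ⟨hbox _ fun v => by simpa using hB0, rfl⟩
  obtain ⟨f1, hf1S, hf1min⟩ :=
    Finset.exists_min_image S0 (Fen G (fun v => (D v : ℝ) - μ v)) ⟨_, h0S0⟩
  set S1 : Finset (G.V → ℤ) := S0.filter
    (fun g => Fen G (fun v => (D v : ℝ) - μ v) g = Fen G (fun v => (D v : ℝ) - μ v) f1)
    with hS1def
  obtain ⟨f2, hf2S, hf2max⟩ := Finset.exists_max_image S1 (fun g => ∑ v, g v)
    ⟨f1, by rw [hS1def, Finset.mem_filter]; exact ⟨hf1S, rfl⟩⟩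
  rw [hS1def, Finset.mem_filter] at hf2S
  obtain ⟨hf2S0, hf2F⟩ := hf2S
  have hf2v0 : f2 v0 = 0 := (Finset.mem_filter.mp hf2S0).2
  have hF0 : Fen G (fun v => (D v : ℝ) - μ v) f1 ≤ 0 := by
    have := hf1min _ h0S0
    rwa [Fen_zero] at this
  have hglob : ∀ g : G.V → ℤ, g v0 = 0 →
      Fen G (fun v => (D v : ℝ) - μ v) f2 ≤ Fen G (fun v => (D v : ℝ) - μ v) g := by
    intro g hg0
    by_cases hgF : Fen G (fun v => (D v : ℝ) - μ v) g ≤ 0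
    · rw [hf2F]
      exact hf1min g (by rw [hS0def, Finset.mem_filter]; exact ⟨hcoerce g hg0 hgF, hg0⟩)
    · push_neg at hgF
      rw [hf2F]
      linarith
  set E : G.V → ℤ := fun v => D v - G.prin f2 v with hEdef
  have hbeta : ∀ B : Finset G.V, B ⊂ Finset.univ → 0 ≤ G.beta μ E B := by
    intro B _
    have hch := Fen_change μ D hc f2 B
    set k : ℤ := ind Bᶜ v0 with hkdef
    set g' : G.V → ℤ := fun v => f2 v + ind Bᶜ v - k with hg'def
    have hg'0 : g' v0 = 0 := by rw [hg'def]; simp [hkdef, hf2v0]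
    have heq : (fun v => f2 v + ind Bᶜ v) = fun v => g' v + k := by
      funext v; rw [hg'def]; ring
    have hFg : Fen G (fun v => (D v : ℝ) - μ v) (fun v => f2 v + ind Bᶜ v)
        = Fen G (fun v => (D v : ℝ) - μ v) g' := by
      rw [heq, Fen_add_const _ hc g' k]
    have := hglob g' hg'0
    rw [← hFg, hch] at this
    show 0 ≤ G.beta μ (fun v => D v - G.prin f2 v) B
    linarith
  have hstrict : ∀ B : Finset G.V, B ⊂ Finset.univ → v0 ∈ B → 0 < G.beta μ E B := by
    intro B hB hv0B
    rcases lt_or_eq_of_le (hbeta B hB) with h | h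
    · exact h
    · exfalso
      have hch := Fen_change μ D hc f2 B
      set g : G.V → ℤ := fun v => f2 v + ind Bᶜ v with hgdef
      have hg0 : g v0 = 0 := by
        rw [hgdef]
        simp only [ind, Finset.mem_compl, hv0B, not_true, if_neg, hf2v0]
        simp [hv0B]
      have h' : G.beta μ (fun v => D v - G.prin f2 v) B = 0 := h.symm
      have hFg : Fen G (fun v => (D v : ℝ) - μ v) g
          = Fen G (fun v => (D v : ℝ) - μ v) f1 := by
        rw [hgdef, hch, h', hf2F]
        ring
      have hgS0 : g ∈ S0 := by
        rw [hS0def, Finset.mem_filter]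
        exact ⟨hcoerce g hg0 (by rw [hFg]; exact hF0), hg0⟩
      have hgS1 : g ∈ S1 := by
        rw [hS1def, Finset.mem_filter]
        exact ⟨hgS0, hFg⟩
      have hle := hf2max g hgS1
      have hsum : ∑ v, g v = (∑ v, f2 v) + (Bᶜ).card := by
        rw [hgdef]
        rw [Finset.sum_add_distrib]
        congr 1
        simp only [ind]
        rw [Finset.sum_ite_mem, Finset.univ_inter]
        simp
      obtain ⟨x, _, hxB⟩ := Finset.exists_of_ssubset hB
      have hBc : 0 < (Bᶜ).card := Finset.card_pos.mpr ⟨x, Finset.mem_compl.mpr hxB⟩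
      omega
  have hEdeg : G.deg E = d := by
    unfold Multigraph.deg
    simp only [hEdef]
    rw [Finset.sum_sub_distrib, prin_sum_zero]
    unfold Multigraph.deg at hD
    omega
  have hEq : G.Quasistable μ v0 E := fun A hA => ⟨hbeta A hA, fun hv => hstrict A hA hv⟩
  refine ⟨E, ⟨hEdeg, hEq, ⟨f2, fun v => by simp only [hEdef]; ring⟩⟩, ?_⟩
  rintro y ⟨hdy, hqy, g, hg⟩
  refine quasi_unique G μ d hμ v0 y E hdy hEdeg hqy hEq (fun v => f2 v - g v) fun v => ?_
  rw [prin_sub f2 g v]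
  have h1 := hg v
  have h2 : D v - E v = G.prin f2 v := by simp only [hEdef]; ring
  omega
end

section
/- Let Γ be a finite connected multigraph, v0 a vertex of Γ, μ a degree-d polarization on Γ, and ι : Γ → Γ' a specialization (contraction of a subset of edges). If (E,D) is a (v0,μ)-quasistable degree-d pseudo-divisor on Γ, then ι_*(E,D) is a (ι(v0), ι_*(μ))-quasistable degree-d pseudo-divisor on Γ'. -/
namespace Multigraph

lemma joins_symm {G : Multigraph} {e : G.E} {v w : G.V} (h : G.Joins e v w) :
    G.Joins e w v := by
  rcases h with ⟨h1, h2⟩ | ⟨h1, h2⟩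
  · exact Or.inr ⟨h1, h2⟩
  · exact Or.inl ⟨h1, h2⟩

lemma joins_ends {G : Multigraph} (e : G.E) : G.Joins e (G.ends1 e) (G.ends2 e) :=
  Or.inl ⟨rfl, rfl⟩

lemma mem_between_compl {G : Multigraph} {A : Finset G.V} {e : G.E} :
    e ∈ G.betweenSet A Aᶜ ↔ ∃ v w, v ∈ A ∧ w ∉ A ∧ G.Joins e v w := by
  simp only [betweenSet, Finset.mem_filter, Finset.mem_univ, true_and, Finset.mem_sdiff,
    Finset.mem_compl, not_not]
  constructor
  · rintro ⟨v, ⟨hv, -⟩, w, ⟨-, hw⟩, hj⟩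
    exact ⟨v, w, hv, hw, hj⟩
  · rintro ⟨v, w, hv, hw, hj⟩
    exact ⟨v, ⟨hv, hv⟩, w, ⟨hw, hw⟩, hj⟩

namespace Spec

variable {G G' : Multigraph} (f : Spec G G') (S : Finset G.E)

lemma mem_pushEdges {e' : G'.E} : e' ∈ f.pushEdges S ↔ f.emap e' ∈ S := by
  simp [pushEdges]

/-- The induced map on vertices of subdivisions. -/
noncomputable def phi : G.subV S → G'.subV (f.pushEdges S)
  | Sum.inl v => Sum.inl (f.vmap v)
  | Sum.inr ⟨e, he⟩ =>
    if h : ∃ e', f.emap e' = e then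
      Sum.inr ⟨h.choose, (f.mem_pushEdges S).mpr (by rw [h.choose_spec]; exact he)⟩
    else Sum.inl (f.vmap (G.ends1 e))

lemma phi_inl (v : G.V) : f.phi S (Sum.inl v) = Sum.inl (f.vmap v) := rfl

lemma phi_inr_contr {e : G.E} (he : e ∈ S) (hc : ¬ ∃ e', f.emap e' = e) :
    f.phi S (Sum.inr ⟨e, he⟩) = Sum.inl (f.vmap (G.ends1 e)) := by
  simp [phi, hc]

lemma phi_inr_emap {e' : G'.E} (he : f.emap e' ∈ S) (he' : e' ∈ f.pushEdges S) :
    f.phi S (Sum.inr ⟨f.emap e', he⟩) = Sum.inr ⟨e', he'⟩ := by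
  have h : ∃ e'', f.emap e'' = f.emap e' := ⟨e', rfl⟩
  simp only [phi, dif_pos h]
  congr 1
  exact Subtype.ext (f.emap_inj h.choose_spec)

lemma phi_surj : Function.Surjective (f.phi S) := by
  rintro (v' | ⟨e', he'⟩)
  · obtain ⟨v, hv⟩ := f.vmap_surj v'
    exact ⟨Sum.inl v, by simp [phi_inl, hv]⟩
  · exact ⟨Sum.inr ⟨f.emap e', (f.mem_pushEdges S).mp he'⟩, f.phi_inr_emap S _ he'⟩

/-- The induced map on edges of subdivisions (backwards). -/
def psi : (G'.subdiv (f.pushEdges S)).E → (G.subdiv S).E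
  | Sum.inl ⟨e', he'⟩ => Sum.inl ⟨f.emap e', fun hc => he' ((f.mem_pushEdges S).mpr hc)⟩
  | Sum.inr (⟨e', he'⟩, b) => Sum.inr (⟨f.emap e', (f.mem_pushEdges S).mp he'⟩,
      if f.vmap (G.ends1 (f.emap e')) = G'.ends1 e' then b else !b)

lemma psi_inj : Function.Injective (f.psi S) := by
  rintro (⟨e1, h1⟩ | ⟨⟨e1, h1⟩, b1⟩) (⟨e2, h2⟩ | ⟨⟨e2, h2⟩, b2⟩) h
  · have h' : f.emap e1 = f.emap e2 := congrArg Subtype.val (Sum.inl.inj h)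
    have he := f.emap_inj h'
    subst he
    rfl
  · exact absurd h (by simp [psi])
  · exact absurd h (by simp [psi])
  · have h' := Sum.inr.inj h
    have hemap : f.emap e1 = f.emap e2 :=
      congrArg Subtype.val (congrArg Prod.fst h')
    have he := f.emap_inj hemap
    subst he
    have hb := congrArg Prod.snd h'
    simp only at hb
    by_cases hc : f.vmap (G.ends1 (f.emap e1)) = G'.ends1 e1
    · rw [if_pos hc, if_pos hc] at hb
      rw [hb]
    · rw [if_neg hc, if_neg hc] at hb
      cases b1 <;> cases b2 <;> simp_all <;> rfl

lemma compat (ε' : (G'.subdiv (f.pushEdges S)).E) :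
    (G'.subdiv (f.pushEdges S)).Joins ε'
      (f.phi S ((G.subdiv S).ends1 (f.psi S ε')))
      (f.phi S ((G.subdiv S).ends2 (f.psi S ε'))) := by
  rcases ε' with ⟨e', he'⟩ | ⟨⟨e', he'⟩, b⟩
  · rcases f.joins_comm e' with ⟨h1, h2⟩ | ⟨h1, h2⟩
    · exact Or.inl ⟨by simp [subdiv, psi, phi_inl, h1], by simp [subdiv, psi, phi_inl, h2]⟩
    · exact Or.inr ⟨by simp [subdiv, psi, phi_inl, h1], by simp [subdiv, psi, phi_inl, h2]⟩
  · have hm : f.emap e' ∈ S := (f.mem_pushEdges S).mp he'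
    have hx : f.phi S (Sum.inr ⟨f.emap e', hm⟩) = Sum.inr ⟨e', he'⟩ :=
      f.phi_inr_emap S hm he'
    by_cases hc : f.vmap (G.ends1 (f.emap e')) = G'.ends1 e'
    · have hpsi : f.psi S (Sum.inr (⟨e', he'⟩, b)) = Sum.inr (⟨f.emap e', hm⟩, b) := by
        simp [psi, hc]
        rfl
      rw [hpsi]
      have h2 : f.vmap (G.ends2 (f.emap e')) = G'.ends2 e' := by
        rcases f.joins_comm e' with ⟨g1, g2⟩ | ⟨g1, g2⟩
        · exact g2.symm
        · rw [g2, hc, ← g1]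
      cases b
      · exact Or.inl ⟨by simp [subdiv, phi_inl, hc], by simp [subdiv, hx]⟩
      · exact Or.inl ⟨by simp [subdiv, hx], by simp [subdiv, phi_inl, h2]⟩
    · have hpsi : f.psi S (Sum.inr (⟨e', he'⟩, b)) = Sum.inr (⟨f.emap e', hm⟩, !b) := by
        simp [psi, hc]
        rfl
      rw [hpsi]
      have h1 : f.vmap (G.ends2 (f.emap e')) = G'.ends1 e' := by
        rcases f.joins_comm e' with ⟨g1, g2⟩ | ⟨g1, g2⟩
        · exact absurd g1.symm hc
        · exact g1.symm
      have h2 : f.vmap (G.ends1 (f.emap e')) = G'.ends2 e' := by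
        rcases f.joins_comm e' with ⟨g1, g2⟩ | ⟨g1, g2⟩
        · exact absurd g1.symm hc
        · exact g2.symm
      cases b
      · exact Or.inr ⟨by simp [subdiv, phi_inl, h1], by simp [subdiv, hx]⟩
      · exact Or.inr ⟨by simp [subdiv, hx], by simp [subdiv, phi_inl, h2]⟩

lemma joins_psi {ε' : (G'.subdiv (f.pushEdges S)).E} {a b : G.subV S}
    (h : (G.subdiv S).Joins (f.psi S ε') a b) :
    (G'.subdiv (f.pushEdges S)).Joins ε' (f.phi S a) (f.phi S b) := by
  rcases h with ⟨h1, h2⟩ | ⟨h1, h2⟩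
  · rw [← h1, ← h2]; exact f.compat S ε'
  · rw [← h1, ← h2]; exact joins_symm (f.compat S ε')

lemma phi_const {ε : (G.subdiv S).E} (h : ¬ ∃ ε', f.psi S ε' = ε) :
    f.phi S ((G.subdiv S).ends1 ε) = f.phi S ((G.subdiv S).ends2 ε) := by
  rcases ε with ⟨e, he⟩ | ⟨⟨e, he⟩, b⟩
  · by_cases hr : ∃ e'', f.emap e'' = e
    · obtain ⟨e'', rfl⟩ := hr
      exact absurd ⟨Sum.inl ⟨e'', fun hc => he ((f.mem_pushEdges S).mp hc)⟩, rfl⟩ h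
    · have hg := f.glue e hr
      simp [subdiv, phi_inl, hg]
  · by_cases hr : ∃ e'', f.emap e'' = e
    · obtain ⟨e'', rfl⟩ := hr
      have hmem : e'' ∈ f.pushEdges S := (f.mem_pushEdges S).mpr he
      refine absurd ⟨Sum.inr (⟨e'', hmem⟩,
        if f.vmap (G.ends1 (f.emap e'')) = G'.ends1 e'' then b else !b), ?_⟩ h
      by_cases hc : f.vmap (G.ends1 (f.emap e'')) = G'.ends1 e'' <;> simp [psi, hc] <;> rfl
    · have hg := f.glue e hr
      have hphi : f.phi S (Sum.inr ⟨e, he⟩) = Sum.inl (f.vmap (G.ends1 e)) :=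
        f.phi_inr_contr S he hr
      cases b
      · simp [subdiv, phi_inl, hphi]
      · simp [subdiv, phi_inl, hphi, hg]

lemma delta_push (A' : Finset (G'.subV (f.pushEdges S))) :
    (G.subdiv S).delta ((Finset.univ.filter fun (y : G.subV S) => f.phi S y ∈ A' : Finset (G.subV S))) =
      (G'.subdiv (f.pushEdges S)).delta A' := by
  classical
  set A : Finset (G.subV S) := Finset.univ.filter fun y => f.phi S y ∈ A' with hA
  have hmemA : ∀ y : G.subV S, y ∈ A ↔ f.phi S y ∈ A' := by
    intro y; simp [hA]
  have himg : (G.subdiv S).betweenSet A Aᶜ =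
      ((G'.subdiv (f.pushEdges S)).betweenSet A' A'ᶜ).image (f.psi S) := by
    ext ε
    simp only [Finset.mem_image]
    refine mem_between_compl.trans ?_
    constructor
    · rintro ⟨v, w, hv, hw, hj⟩
      have hr : ∃ ε', f.psi S ε' = ε := by
        by_contra hcon
        have hcc := f.phi_const S hcon
        have heq : f.phi S v = f.phi S w := by
          rcases hj with ⟨h1, h2⟩ | ⟨h1, h2⟩
          · rw [← h1, ← h2]; exact hcc
          · rw [← h1, ← h2]; exact hcc.symm
        have hvA' : f.phi S v ∈ A' := (hmemA v).mp hv
        have hwA' : f.phi S w ∉ A' := fun hx => hw ((hmemA w).mpr hx)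
        exact hwA' (heq ▸ hvA')
      obtain ⟨ε', rfl⟩ := hr
      refine ⟨ε', ?_, rfl⟩
      refine mem_between_compl.mpr ?_
      exact ⟨f.phi S v, f.phi S w, (hmemA v).mp hv,
        fun hx => hw ((hmemA w).mpr hx), f.joins_psi S hj⟩
    · rintro ⟨ε', hε', rfl⟩
      replace hε' := mem_between_compl.mp hε'
      obtain ⟨v', w', hv', hw', hj'⟩ := hε'
      have hc := f.compat S ε'
      rcases hc with ⟨h1, h2⟩ | ⟨h1, h2⟩ <;> rcases hj' with ⟨g1, g2⟩ | ⟨g1, g2⟩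
      · exact ⟨_, _, (hmemA _).mpr ((h1.symm.trans g1).symm ▸ hv'),
          fun hx => hw' ((h2.symm.trans g2) ▸ (hmemA _).mp hx), joins_ends _⟩
      · exact ⟨_, _, (hmemA _).mpr ((h2.symm.trans g2).symm ▸ hv'),
          fun hx => hw' ((h1.symm.trans g1) ▸ (hmemA _).mp hx), joins_symm (joins_ends _)⟩
      · exact ⟨_, _, (hmemA _).mpr ((h1.symm.trans g1).symm ▸ hv'),
          fun hx => hw' ((h2.symm.trans g2) ▸ (hmemA _).mp hx), joins_symm (joins_ends _)⟩
      · exact ⟨_, _, (hmemA _).mpr ((h2.symm.trans g2).symm ▸ hv'),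
          fun hx => hw' ((h1.symm.trans g1) ▸ (hmemA _).mp hx), joins_ends _⟩
  show ((G.subdiv S).betweenSet A Aᶜ).card =
    ((G'.subdiv (f.pushEdges S)).betweenSet A' A'ᶜ).card
  rw [himg, Finset.card_image_of_injective _ (f.psi_inj S)]

lemma pushPDFun_fiber (D : G.subV S → ℤ) (x' : G'.subV (f.pushEdges S)) :
    f.pushPDFun S D x' = ∑ y : G.subV S, if f.phi S y = x' then D y else 0 := by
  classical
  rw [Fintype.sum_sum_type]
  rcases x' with v' | x'
  · show (∑ v, if f.vmap v = v' then D (Sum.inl v) else 0) +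
      (∑ e ∈ S.attach,
        if e.1 ∈ f.contracted ∧ f.vmap (G.ends1 e.1) = v' then D (Sum.inr e) else 0) = _
    congr 1
    · exact Finset.sum_congr rfl fun v _ => by simp [phi_inl]
    · rw [← Finset.univ_eq_attach]
      apply Finset.sum_congr rfl
      rintro ⟨e, he⟩ -
      by_cases hr : ∃ e'', f.emap e'' = e
      · have h1 : e ∉ f.contracted := by simp [contracted, hr]
        obtain ⟨e'', rfl⟩ := hr
        rw [f.phi_inr_emap S he ((f.mem_pushEdges S).mpr he)]
        simp [h1]
      · have h1 : e ∈ f.contracted := by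
          simp only [contracted, Finset.mem_filter, Finset.mem_univ, true_and]
          exact hr
        rw [f.phi_inr_contr S he hr]
        simp [h1]
  · have hm : f.emap x'.1 ∈ S := (f.mem_pushEdges S).mp x'.2
    have h0 : ∀ v : G.V,
        (if f.phi S (Sum.inl v) = Sum.inr x' then D (Sum.inl v) else 0) = 0 := by
      intro v; simp [phi_inl]
    rw [Finset.sum_congr rfl fun v _ => h0 v, Finset.sum_const_zero, zero_add]
    rw [Finset.sum_eq_single (⟨f.emap x'.1, hm⟩ : {e // e ∈ S})]
    · rw [f.phi_inr_emap S hm x'.2, if_pos (by simp)]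
      rfl
    · rintro ⟨e, he⟩ - hne
      by_cases hr : ∃ e'', f.emap e'' = e
      · obtain ⟨e'', rfl⟩ := hr
        rw [f.phi_inr_emap S he ((f.mem_pushEdges S).mpr he)]
        rw [if_neg]
        intro hcon
        apply hne
        have : e'' = x'.1 := by
          have := Sum.inr.inj hcon
          exact congrArg Subtype.val this
        simp [this]
      · rw [f.phi_inr_contr S he hr, if_neg (by simp)]
    · intro hcon
      exact absurd (Finset.mem_univ _) hcon

lemma subPol_push_fiber (μ : G.V → ℝ) (x' : G'.subV (f.pushEdges S)) :
    G'.subPol (f.pushEdges S) (f.pushPol μ) x' =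
      ∑ y : G.subV S, if f.phi S y = x' then G.subPol S μ y else 0 := by
  classical
  rw [Fintype.sum_sum_type]
  rcases x' with v' | x'
  · have h2 : ∀ x : {e // e ∈ S},
        (if f.phi S (Sum.inr x) = Sum.inl v' then G.subPol S μ (Sum.inr x) else 0) = 0 := by
      intro x; simp [subPol]
    rw [Finset.sum_congr rfl fun x _ => h2 x, Finset.sum_const_zero, add_zero]
    show f.pushPol μ v' = _
    unfold pushPol
    exact Finset.sum_congr rfl fun v _ => by simp [phi_inl, subPol]
  · simp [subPol, phi_inl]

lemma sum_push_fun {M : Type*} [AddCommMonoid M] (g : G.subV S → M)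
    (g' : G'.subV (f.pushEdges S) → M)
    (hfib : ∀ x', g' x' = ∑ y : G.subV S, if f.phi S y = x' then g y else 0)
    (A' : Finset (G'.subV (f.pushEdges S))) :
    ∑ x' ∈ A', g' x' = ∑ y ∈ Finset.univ.filter (fun y => f.phi S y ∈ A'), g y := by
  classical
  rw [Finset.sum_filter]
  calc ∑ x' ∈ A', g' x'
      = ∑ x' ∈ A', ∑ y : G.subV S, if f.phi S y = x' then g y else 0 :=
        Finset.sum_congr rfl fun x' _ => hfib x'
    _ = ∑ y : G.subV S, ∑ x' ∈ A', if f.phi S y = x' then g y else 0 := Finset.sum_comm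
    _ = ∑ y : G.subV S, if f.phi S y ∈ A' then g y else 0 :=
        Finset.sum_congr rfl fun y _ => by
          rw [Finset.sum_ite_eq A' (f.phi S y) (fun _ => g y)]

end Spec
end Multigraph

open Multigraph

/-- If `(E,D)` is a `(v0,μ)`-quasistable degree-`d` pseudo-divisor on `Γ`
and `ι : Γ → Γ'` is a specialization, then `ι_*(E,D)` is a `(ι(v0),ι_*(μ))`-quasistable
degree-`d` pseudo-divisor on `Γ'`. -/
theorem pushforward_quasistable (G G' : Multigraph) (hconn : G.Connected)
    (f : Multigraph.Spec G G') (d : ℤ) (μ : G.V → ℝ) (hμ : G.IsPolarization μ d)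
    (v0 : G.V) (S : Finset G.E) (D : G.subV S → ℤ)
    (h : G.QSPseudo μ v0 d S D) :
    G'.QSPseudo (f.pushPol μ) (f.vmap v0) d (f.pushEdges S) (f.pushPDFun S D) := by
  classical
  obtain ⟨hPD, hdeg, hqs⟩ := h
  have hfibD := f.pushPDFun_fiber S D
  have hfibm := f.subPol_push_fiber S μ
  refine ⟨?_, ?_, ?_⟩
  · intro x
    exact hPD _
  · have h1 := f.sum_push_fun S D (f.pushPDFun S D) hfibD Finset.univ
    rw [Finset.filter_true_of_mem (fun y _ => Finset.mem_univ (f.phi S y))] at h1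
    exact h1.trans hdeg
  · intro A' hA'
    set A : Finset (G.subV S) := Finset.univ.filter (fun y => f.phi S y ∈ A') with hAdef
    have hAsub : A ⊂ Finset.univ := by
      rw [Finset.ssubset_univ_iff]
      obtain ⟨x', hx'⟩ : ∃ x', x' ∉ A' := by
        by_contra hcon
        push_neg at hcon
        exact hA'.2 fun x hx => hcon x
      obtain ⟨y, rfl⟩ := f.phi_surj S x'
      intro hcon
      have hy : y ∈ A := hcon ▸ Finset.mem_univ y
      exact hx' ((Finset.mem_filter.mp hy).2)
    have hbeta : (G'.subdiv (f.pushEdges S)).beta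
        (G'.subPol (f.pushEdges S) (f.pushPol μ)) (f.pushPDFun S D) A' =
        (G.subdiv S).beta (G.subPol S μ) D A := by
      unfold beta
      have h1 : (∑ v ∈ A', ((f.pushPDFun S D v : ℤ) : ℝ)) = ∑ v ∈ A, ((D v : ℤ) : ℝ) := by
        have h := f.sum_push_fun S D (f.pushPDFun S D) hfibD A'
        have h' : ∑ x' ∈ A', f.pushPDFun S D x' = ∑ x ∈ A, D x := by
          rw [hAdef]; refine h.trans (Finset.sum_congr ?_ fun _ _ => rfl)
          congr 1
        exact (Int.cast_sum _ _).symm.trans ((congrArg (Int.cast : ℤ → ℝ) h').trans (Int.cast_sum _ _))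
      have h2 : (∑ v ∈ A', G'.subPol (f.pushEdges S) (f.pushPol μ) v)
          = ∑ v ∈ A, G.subPol S μ v := by
        rw [hAdef]
        refine (f.sum_push_fun S (G.subPol S μ) (G'.subPol (f.pushEdges S) (f.pushPol μ)) hfibm A').trans
          (Finset.sum_congr ?_ fun _ _ => rfl)
        congr 1
      have h3 : (((G'.subdiv (f.pushEdges S)).delta A' : ℕ) : ℝ)
          = (((G.subdiv S).delta A : ℕ) : ℝ) := by
        have h3' : (G'.subdiv (f.pushEdges S)).delta A' = (G.subdiv S).delta A := by
          refine (f.delta_push S A').symm.trans ?_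
          rw [hAdef]; congr 2
        exact_mod_cast congrArg (Nat.cast : ℕ → ℝ) h3'
      rw [h1, h2, h3]
      rfl
    obtain ⟨hge, hstrict⟩ := hqs A hAsub
    constructor
    · rw [hbeta]; exact hge
    · intro hv0
      rw [hbeta]
      apply hstrict
      exact Finset.mem_filter.mpr ⟨Finset.mem_univ _, hv0⟩
end

section
/- Let Γ be a finite connected tree-like multigraph (i.e., Γ becomes a tree after contracting all its loops), v0 a vertex of Γ, and μ a degree-d polarization on Γ. Then there is exactly one (v0,μ)-quasistable degree-d divisor on Γ. -/
open Multigraph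

namespace Multigraph

/-- A tree-like graph: a connected graph which becomes a tree after contracting all its
loops (equivalently, whose number of non-loop edges equals its number of vertices minus
one). -/
def TreeLike (G : Multigraph) : Prop :=
  G.Connected ∧
    (Finset.univ.filter fun e : G.E => G.ends1 e ≠ G.ends2 e).card + 1 =
      Fintype.card G.V

end Multigraph

namespace TUQ
open Multigraph Finset

variable {G : Multigraph}

lemma joins_symm {e : G.E} {v w : G.V} (h : G.Joins e v w) : G.Joins e w v := by
  rcases h with ⟨h1, h2⟩ | ⟨h1, h2⟩
  · exact Or.inr ⟨h1, h2⟩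
  · exact Or.inl ⟨h1, h2⟩

lemma joins_cases {e : G.E} {a b x y : G.V} (h1 : G.Joins e a b) (h2 : G.Joins e x y) :
    (x = a ∧ y = b) ∨ (x = b ∧ y = a) := by
  rcases h1 with ⟨p, q⟩ | ⟨p, q⟩ <;> rcases h2 with ⟨r, s⟩ | ⟨r, s⟩
  · exact Or.inl ⟨r.symm.trans p, s.symm.trans q⟩
  · exact Or.inr ⟨s.symm.trans q, r.symm.trans p⟩
  · exact Or.inr ⟨r.symm.trans p, s.symm.trans q⟩
  · exact Or.inl ⟨s.symm.trans q, r.symm.trans p⟩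

lemma step_symm {S : Set G.E} {v w : G.V} (h : G.Step S v w) : G.Step S w v := by
  obtain ⟨e, he, hj⟩ := h; exact ⟨e, he, joins_symm hj⟩

lemma rtg_symm {S : Set G.E} {v w : G.V} (h : Relation.ReflTransGen (G.Step S) v w) :
    Relation.ReflTransGen (G.Step S) w v :=
  (@Relation.ReflTransGen.stdSymm _ _ ⟨fun _ _ h => step_symm h⟩).symm _ _ h

/-- Reachability in at most `n` steps. -/
def reachIn (G : Multigraph) (S : Set G.E) : ℕ → G.V → G.V → Prop
  | 0, v, w => v = w
  | (n+1), v, w => reachIn G S n v w ∨ ∃ u, reachIn G S n v u ∧ G.Step S u w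

lemma reachIn_of_rtg {S : Set G.E} {v w : G.V}
    (h : Relation.ReflTransGen (G.Step S) v w) : ∃ n, reachIn G S n v w := by
  induction h with
  | refl => exact ⟨0, rfl⟩
  | tail _ hstep ih => obtain ⟨n, hn⟩ := ih; exact ⟨n + 1, Or.inr ⟨_, hn, hstep⟩⟩

/-- A connected graph (from `v0`) has at least `card V - 1` non-loop edges in `S`. -/
lemma card_V_le {S : Set G.E} (v0 : G.V) {T : Finset G.E}
    (hT : ∀ e : G.E, e ∈ T ↔ (e ∈ S ∧ G.ends1 e ≠ G.ends2 e))
    (h : ∀ w, Relation.ReflTransGen (G.Step S) v0 w) :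
    Fintype.card G.V ≤ T.card + 1 := by
  classical
  have hex : ∀ w, ∃ n, reachIn G S n v0 w := fun w => reachIn_of_rtg (h w)
  set dist : G.V → ℕ := fun w => Nat.find (hex w) with hdist
  have key : ∀ w : G.V, w ≠ v0 → ∃ e, (e ∈ S ∧ G.ends1 e ≠ G.ends2 e) ∧
      ∃ u, G.Joins e u w ∧ dist u < dist w := by
    intro w hw
    have hspec := Nat.find_spec (hex w)
    rcases hd : Nat.find (hex w) with _ | m
    · rw [hd] at hspec; exact absurd hspec.symm hw
    · rw [hd] at hspec
      rcases hspec with h' | ⟨u, hu, e, heS, hj⟩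
      · exact absurd h' (Nat.find_min (hex w) (by omega))
      · have hdu : dist u ≤ m := Nat.find_min' (hex u) hu
        have hdw : dist w = m + 1 := hd
        have hne : u ≠ w := by
          intro h; rw [h] at hdu; omega
        have hnl : G.ends1 e ≠ G.ends2 e := by
          rcases hj with ⟨h1, h2⟩ | ⟨h1, h2⟩ <;> rw [h1, h2] <;>
            first | exact hne | exact fun hh => hne hh.symm
        exact ⟨e, ⟨heS, hnl⟩, u, hj, by omega⟩
  let f : {w : G.V // w ≠ v0} → {e : G.E // e ∈ T} := fun w =>
    ⟨Classical.choose (key w.1 w.2), (hT _).mpr (Classical.choose_spec (key w.1 w.2)).1⟩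
  have hinj : Function.Injective f := by
    intro w1 w2 hfeq
    have h1 := (Classical.choose_spec (key w1.1 w1.2)).2
    have h2 := (Classical.choose_spec (key w2.1 w2.2)).2
    obtain ⟨u1, hj1, hlt1⟩ := h1
    obtain ⟨u2, hj2, hlt2⟩ := h2
    have heq : Classical.choose (key w1.1 w1.2) = Classical.choose (key w2.1 w2.2) :=
      congrArg Subtype.val hfeq
    rw [heq] at hj1
    rcases joins_cases hj2 hj1 with ⟨ha, hb⟩ | ⟨ha, hb⟩
    · exact Subtype.ext hb
    · exfalso; rw [ha, hb] at hlt1; omega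
  have hcard := Fintype.card_le_of_injective f hinj
  have h1 : Fintype.card {w : G.V // w ≠ v0} = Fintype.card G.V - 1 := by
    simp [Fintype.card_subtype_compl, Fintype.card_subtype_eq]
  have h2 : Fintype.card {e : G.E // e ∈ T} = T.card := Fintype.card_coe T
  have h3 : 0 < Fintype.card G.V := Fintype.card_pos_iff.mpr ⟨v0⟩
  rw [h1, h2] at hcard
  omega

end TUQ
namespace TUQ
open Multigraph Finset

variable {G : Multigraph}

/-- The set of non-loop edges. -/
def NL (G : Multigraph) : Finset G.E :=
  Finset.univ.filter fun e : G.E => G.ends1 e ≠ G.ends2 e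

/-- The side of the edge `e0` away from `v0`: vertices not reachable from `v0`
avoiding `e0`. -/
noncomputable def Aside (G : Multigraph) (v0 : G.V) (e0 : G.E) : Finset G.V :=
  @Finset.filter _ (fun w => ¬ Relation.ReflTransGen (G.Step {f | f ≠ e0}) v0 w)
    (fun _ => Classical.dec _) Finset.univ

lemma mem_Aside {v0 : G.V} {e0 : G.E} {w : G.V} :
    w ∈ Aside G v0 e0 ↔ ¬ Relation.ReflTransGen (G.Step {f | f ≠ e0}) v0 w := by
  simp [Aside, Finset.mem_filter]

lemma not_v0_mem_Aside {v0 : G.V} {e0 : G.E} : v0 ∉ Aside G v0 e0 := by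
  rw [mem_Aside]; exact fun h => h Relation.ReflTransGen.refl

lemma aside_closed {v0 : G.V} {e0 f : G.E} {x y : G.V} (hf : f ≠ e0)
    (hj : G.Joins f x y) (hx : x ∈ Aside G v0 e0) : y ∈ Aside G v0 e0 := by
  rw [mem_Aside] at hx ⊢
  intro hy
  exact hx (hy.tail ⟨f, hf, joins_symm hj⟩)

lemma aside_mem_iff_mem {v0 : G.V} {e0 f : G.E} {x y : G.V} (hf : f ≠ e0)
    (hj : G.Joins f x y) : (x ∈ Aside G v0 e0) ↔ (y ∈ Aside G v0 e0) :=
  ⟨fun hx => aside_closed hf hj hx, fun hy => aside_closed hf (joins_symm hj) hy⟩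

lemma aside_crossed {v0 : G.V} {e0 : G.E} (hconn : G.Connected) {w : G.V}
    (hw : w ∈ Aside G v0 e0) :
    ∃ x ∉ Aside G v0 e0, ∃ y ∈ Aside G v0 e0, G.Joins e0 x y := by
  have h := hconn v0 w
  induction h with
  | refl => exact absurd hw not_v0_mem_Aside
  | @tail b c _ hstep ih =>
    by_cases hb : b ∈ Aside G v0 e0
    · exact ih hb
    · obtain ⟨g, -, hj⟩ := hstep
      by_cases hg : g = e0
      · exact ⟨b, hb, c, hw, hg ▸ hj⟩
      · exact absurd (aside_closed hg (joins_symm hj) hw) hb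

lemma aside_nonempty {v0 : G.V} (htree : G.TreeLike) {e0 : G.E}
    (h0 : e0 ∈ NL G) : (Aside G v0 e0).Nonempty := by
  classical
  by_contra hne
  rw [Finset.not_nonempty_iff_eq_empty] at hne
  have hreach : ∀ w, Relation.ReflTransGen (G.Step {f | f ≠ e0}) v0 w := by
    intro w
    by_contra h
    have : w ∈ Aside G v0 e0 := mem_Aside.mpr h
    simp [hne] at this
  have hT : ∀ e : G.E, e ∈ (NL G).erase e0 ↔
      (e ∈ ({f | f ≠ e0} : Set G.E) ∧ G.ends1 e ≠ G.ends2 e) := by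
    intro e
    simp [NL, Finset.mem_erase, Set.mem_setOf_eq, and_comm]
  have hle := card_V_le v0 hT hreach
  have he0 : e0 ∈ NL G := h0
  have herase : ((NL G).erase e0).card = (NL G).card - 1 :=
    Finset.card_erase_of_mem he0
  have hcard : (NL G).card + 1 = Fintype.card G.V := htree.2
  have hpos : 0 < (NL G).card := Finset.card_pos.mpr ⟨e0, he0⟩
  rw [herase] at hle
  omega

/-- The endpoint of `e0` on the far side from `v0`. -/
noncomputable def cIn (G : Multigraph) (v0 : G.V) (e0 : G.E) : G.V :=
  if G.ends1 e0 ∈ Aside G v0 e0 then G.ends1 e0 else G.ends2 e0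

/-- The endpoint of `e0` on the `v0`-side. -/
noncomputable def cOut (G : Multigraph) (v0 : G.V) (e0 : G.E) : G.V :=
  if G.ends1 e0 ∈ Aside G v0 e0 then G.ends2 e0 else G.ends1 e0

lemma joins_cIn_cOut {v0 : G.V} (e0 : G.E) : G.Joins e0 (cIn G v0 e0) (cOut G v0 e0) := by
  unfold cIn cOut
  split
  · exact Or.inl ⟨rfl, rfl⟩
  · exact Or.inr ⟨rfl, rfl⟩

lemma cIn_spec {v0 : G.V} (htree : G.TreeLike) {e0 : G.E} (h0 : e0 ∈ NL G) :
    cIn G v0 e0 ∈ Aside G v0 e0 ∧ cOut G v0 e0 ∉ Aside G v0 e0 := by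
  obtain ⟨w, hw⟩ := aside_nonempty htree h0 (v0 := v0)
  obtain ⟨x, hx, y, hy, hj⟩ := aside_crossed htree.1 hw
  unfold cIn cOut
  rcases hj with ⟨h1, h2⟩ | ⟨h1, h2⟩
  · rw [h1, h2]
    rw [if_neg hx, if_neg hx]
    exact ⟨hy, hx⟩
  · rw [h1, h2]
    rw [if_pos hy, if_pos hy]
    exact ⟨hy, hx⟩

end TUQ
namespace TUQ
open Multigraph Finset

variable {G : Multigraph}

/-- The summand in the telescoping identity. -/
noncomputable def Fe (G : Multigraph) (v0 : G.V) (A : Finset G.V) (x : G.V) (e : G.E) : ℝ :=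
  ((if cIn G v0 e ∈ A then (1 : ℝ) else 0) - (if cOut G v0 e ∈ A then (1 : ℝ) else 0)) *
    (if x ∈ Aside G v0 e then (1 : ℝ) else 0)

/-- Key telescoping identity: for every vertex `w` and subset `A`. -/
lemma pw (htree : G.TreeLike) (v0 : G.V) (A : Finset G.V) (w : G.V) :
    (if w ∈ A then (1 : ℝ) else 0) = (if v0 ∈ A then (1 : ℝ) else 0) +
      ∑ e ∈ NL G, Fe G v0 A w e := by
  have h := htree.1 v0 w
  induction h with
  | refl =>
    have hz : ∀ e ∈ NL G, Fe G v0 A v0 e = 0 := by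
      intro e _
      rw [Fe, if_neg not_v0_mem_Aside, mul_zero]
    rw [Finset.sum_congr rfl hz, Finset.sum_const_zero, add_zero]
  | @tail b c _ hstep ih =>
    obtain ⟨g, -, hj⟩ := hstep
    by_cases hbc : b = c
    · exact hbc ▸ ih
    · have hg : g ∈ NL G := by
        simp only [NL, Finset.mem_filter, Finset.mem_univ, true_and]
        rcases hj with ⟨h1, h2⟩ | ⟨h1, h2⟩ <;> rw [h1, h2] <;>
          first | exact hbc | exact fun hh => hbc hh.symm
      have hrest : ∀ e ∈ (NL G).erase g, Fe G v0 A c e = Fe G v0 A b e := by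
        intro e he
        have hne : g ≠ e := fun hh => (Finset.mem_erase.mp he).1 hh.symm
        have hiff : (b ∈ Aside G v0 e) ↔ (c ∈ Aside G v0 e) :=
          aside_mem_iff_mem hne hj
        rw [Fe, Fe, if_congr hiff.symm rfl rfl]
      have hspec := cIn_spec (v0 := v0) htree hg
      have hkey : Fe G v0 A c g = Fe G v0 A b g +
          ((if c ∈ A then (1 : ℝ) else 0) - (if b ∈ A then (1 : ℝ) else 0)) := by
        rcases joins_cases (joins_cIn_cOut g) hj with ⟨hb', hc'⟩ | ⟨hb', hc'⟩
        · rw [Fe, Fe, hb', hc', if_neg hspec.2, if_pos hspec.1]; ring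
        · rw [Fe, Fe, hb', hc', if_pos hspec.1, if_neg hspec.2]; ring
      have ihb : (if b ∈ A then (1 : ℝ) else 0) = (if v0 ∈ A then (1 : ℝ) else 0) +
          (∑ e ∈ (NL G).erase g, Fe G v0 A b e + Fe G v0 A b g) := by
        rw [Finset.sum_erase_add _ _ hg]; exact ih
      rw [← Finset.sum_erase_add (NL G) _ hg, Finset.sum_congr rfl hrest, hkey]
      linarith [ihb]

/-- Indicator-sum helper. -/
lemma sum_mul_ind (g : G.V → ℝ) (A : Finset G.V) :
    ∑ w, g w * (if w ∈ A then (1 : ℝ) else 0) = ∑ w ∈ A, g w := by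
  rw [← Finset.sum_filter_add_sum_filter_not Finset.univ (· ∈ A) _]
  have h1 : ∀ w ∈ Finset.univ.filter (· ∈ A), g w * (if w ∈ A then (1 : ℝ) else 0) = g w := by
    intro w hw
    rw [if_pos (Finset.mem_filter.mp hw).2, mul_one]
  have h2 : ∀ w ∈ Finset.univ.filter (¬ · ∈ A), g w * (if w ∈ A then (1 : ℝ) else 0) = 0 := by
    intro w hw
    rw [if_neg (Finset.mem_filter.mp hw).2, mul_zero]
  rw [Finset.sum_congr rfl h1, Finset.sum_congr rfl h2, Finset.sum_const_zero, add_zero]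
  congr 1
  ext w
  simp

/-- Main summation identity: any weight function summed over `A` decomposes along sides. -/
lemma degid (htree : G.TreeLike) (v0 : G.V) (g : G.V → ℝ) (A : Finset G.V) :
    ∑ v ∈ A, g v = (if v0 ∈ A then (1 : ℝ) else 0) * (∑ v, g v) +
      ∑ e ∈ NL G, ((if cIn G v0 e ∈ A then (1 : ℝ) else 0) -
          (if cOut G v0 e ∈ A then (1 : ℝ) else 0)) * ∑ w ∈ Aside G v0 e, g w := by
  rw [← sum_mul_ind g A]
  have h1 : ∀ w ∈ Finset.univ, g w * (if w ∈ A then (1 : ℝ) else 0) =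
      g w * (if v0 ∈ A then (1 : ℝ) else 0) + ∑ e ∈ NL G, g w * Fe G v0 A w e := by
    intro w _
    rw [pw htree v0 A w, mul_add, Finset.mul_sum]
  rw [Finset.sum_congr rfl h1, Finset.sum_add_distrib, Finset.sum_comm]
  congr 1
  · rw [← Finset.sum_mul, mul_comm]
  · refine Finset.sum_congr rfl fun e _ => ?_
    rw [← sum_mul_ind g (Aside G v0 e), Finset.mul_sum]
    refine Finset.sum_congr rfl fun w _ => ?_
    rw [Fe]; ring

end TUQ
namespace TUQ
open Multigraph Finset

variable {G : Multigraph}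

/-- The edge `e` crosses the subset `A`. -/
def Xing (A : Finset G.V) (e : G.E) : Prop :=
  (G.ends1 e ∈ A ∧ G.ends2 e ∉ A) ∨ (G.ends1 e ∉ A ∧ G.ends2 e ∈ A)

instance (A : Finset G.V) (e : G.E) : Decidable (Xing A e) := by
  unfold Xing; infer_instance

lemma betweenSet_comm (A B : Finset G.V) : G.betweenSet A B = G.betweenSet B A := by
  ext e
  simp only [betweenSet, Finset.mem_filter, Finset.mem_univ, true_and]
  constructor
  · rintro ⟨v, hv, w, hw, hj⟩; exact ⟨w, hw, v, hv, joins_symm hj⟩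
  · rintro ⟨v, hv, w, hw, hj⟩; exact ⟨w, hw, v, hv, joins_symm hj⟩

lemma betweenSet_compl_eq (A : Finset G.V) :
    G.betweenSet A Aᶜ = (NL G).filter (Xing A) := by
  ext e
  simp only [betweenSet, NL, Finset.mem_filter, Finset.mem_univ, true_and,
    Finset.mem_sdiff, Finset.mem_compl, not_not]
  constructor
  · rintro ⟨v, ⟨hv1, hv2⟩, w, ⟨hw1, hw2⟩, hj⟩
    have hvw : v ≠ w := fun h => hw1 (h ▸ hv1)
    rcases hj with ⟨h1, h2⟩ | ⟨h1, h2⟩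
    · exact ⟨by rw [h1, h2]; exact hvw, Or.inl ⟨h1 ▸ hv1, h2 ▸ hw1⟩⟩
    · exact ⟨by rw [h1, h2]; exact fun hh => hvw hh.symm, Or.inr ⟨h1 ▸ hw1, h2 ▸ hv1⟩⟩
  · rintro ⟨-, ⟨h1, h2⟩ | ⟨h1, h2⟩⟩
    · exact ⟨G.ends1 e, ⟨h1, h1⟩, G.ends2 e, ⟨h2, h2⟩, Or.inl ⟨rfl, rfl⟩⟩
    · exact ⟨G.ends2 e, ⟨h2, h2⟩, G.ends1 e, ⟨h1, h1⟩, Or.inr ⟨rfl, rfl⟩⟩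

lemma delta_eq_card (A : Finset G.V) : G.delta A = ((NL G).filter (Xing A)).card := by
  rw [delta, betweenSet_compl_eq]

lemma delta_compl (A : Finset G.V) : G.delta Aᶜ = G.delta A := by
  rw [delta, delta, compl_compl, betweenSet_comm]

lemma delta_real (A : Finset G.V) :
    (G.delta A : ℝ) = ∑ e ∈ NL G, (if Xing A e then (1 : ℝ) else 0) := by
  rw [delta_eq_card, Finset.sum_boole]

lemma xing_iff (v0 : G.V) (A : Finset G.V) (e : G.E) :
    Xing A e ↔ ((cIn G v0 e ∈ A ∧ cOut G v0 e ∉ A) ∨ (cOut G v0 e ∈ A ∧ cIn G v0 e ∉ A)) := by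
  unfold Xing cIn cOut
  split <;> tauto

/-- The forced value of `deg(D|A_e)`. -/
noncomputable def nE (G : Multigraph) (v0 : G.V) (μ : G.V → ℝ) (e : G.E) : ℤ :=
  ⌈(∑ v ∈ Aside G v0 e, μ v) - 1 / 2⌉

lemma nE_ge (v0 : G.V) (μ : G.V → ℝ) (e : G.E) :
    (∑ v ∈ Aside G v0 e, μ v) - 1 / 2 ≤ ((nE G v0 μ e : ℤ) : ℝ) := Int.le_ceil _

lemma nE_lt (v0 : G.V) (μ : G.V → ℝ) (e : G.E) :
    ((nE G v0 μ e : ℤ) : ℝ) < (∑ v ∈ Aside G v0 e, μ v) + 1 / 2 := by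
  have := Int.ceil_lt_add_one ((∑ v ∈ Aside G v0 e, μ v) - 1 / 2)
  rw [nE]; push_cast at this ⊢; linarith

/-- The unique quasistable divisor. -/
noncomputable def D0 (G : Multigraph) (v0 : G.V) (μ : G.V → ℝ) (d : ℤ) : G.V → ℤ :=
  fun v => (if v = v0 then d else 0) +
    ∑ e ∈ NL G, nE G v0 μ e *
      ((if cIn G v0 e = v then 1 else 0) - (if cOut G v0 e = v then 1 else 0))

lemma sumD0 (v0 : G.V) (μ : G.V → ℝ) (d : ℤ) (A : Finset G.V) :
    ∑ v ∈ A, D0 G v0 μ d v = (if v0 ∈ A then d else 0) +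
      ∑ e ∈ NL G, nE G v0 μ e *
        ((if cIn G v0 e ∈ A then 1 else 0) - (if cOut G v0 e ∈ A then 1 else 0)) := by
  unfold D0
  rw [Finset.sum_add_distrib]
  congr 1
  · exact Finset.sum_ite_eq' A v0 (fun _ => d)
  · rw [Finset.sum_comm]
    refine Finset.sum_congr rfl fun e _ => ?_
    rw [← Finset.mul_sum, Finset.sum_sub_distrib,
      Finset.sum_ite_eq A (cIn G v0 e) (fun _ => (1 : ℤ)),
      Finset.sum_ite_eq A (cOut G v0 e) (fun _ => (1 : ℤ))]

lemma sumD0_real (v0 : G.V) (μ : G.V → ℝ) (d : ℤ) (A : Finset G.V) :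
    ∑ v ∈ A, ((D0 G v0 μ d v : ℤ) : ℝ) = (if v0 ∈ A then (d : ℝ) else 0) +
      ∑ e ∈ NL G, ((nE G v0 μ e : ℤ) : ℝ) *
        ((if cIn G v0 e ∈ A then (1 : ℝ) else 0) - (if cOut G v0 e ∈ A then (1 : ℝ) else 0)) := by
  have h2 := congrArg (fun z : ℤ => (z : ℝ)) (sumD0 (G := G) v0 μ d A)
  push_cast [apply_ite (Int.cast : ℤ → ℝ)] at h2
  exact h2

/-- Degree of `D0` is `d`. -/
lemma deg_D0 (v0 : G.V) (μ : G.V → ℝ) (d : ℤ) : G.deg (D0 G v0 μ d) = d := by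
  rw [deg, sumD0]
  simp

/-- The per-edge term of `β_{D0}(A)`. -/
noncomputable def Term (G : Multigraph) (v0 : G.V) (μ : G.V → ℝ) (A : Finset G.V) (e : G.E) : ℝ :=
  ((if cIn G v0 e ∈ A then (1 : ℝ) else 0) - (if cOut G v0 e ∈ A then (1 : ℝ) else 0)) *
      (((nE G v0 μ e : ℤ) : ℝ) - ∑ v ∈ Aside G v0 e, μ v) +
    (if Xing A e then (1 : ℝ) else 0) / 2

lemma beta_D0 (htree : G.TreeLike) (v0 : G.V) {μ : G.V → ℝ} {d : ℤ}
    (hμ : G.IsPolarization μ d) (A : Finset G.V) :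
    G.beta μ (D0 G v0 μ d) A = ∑ e ∈ NL G, Term G v0 μ A e := by
  rw [beta, sumD0_real, degid htree v0 μ A, delta_real, hμ]
  have hterm : ∀ e ∈ NL G, Term G v0 μ A e =
      ((nE G v0 μ e : ℝ) *
          ((if cIn G v0 e ∈ A then (1 : ℝ) else 0) - if cOut G v0 e ∈ A then (1 : ℝ) else 0) -
        ((if cIn G v0 e ∈ A then (1 : ℝ) else 0) - if cOut G v0 e ∈ A then (1 : ℝ) else 0) *
          ∑ w ∈ Aside G v0 e, μ w) +
      (if Xing A e then (1 : ℝ) else 0) / 2 := fun e _ => by rw [Term]; ring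
  rw [Finset.sum_congr rfl hterm, Finset.sum_add_distrib, Finset.sum_sub_distrib]
  have hv : (if v0 ∈ A then (d : ℝ) else 0) = (if v0 ∈ A then (1 : ℝ) else 0) * (d : ℝ) := by
    split <;> ring
  rw [hv, Finset.sum_div]
  ring

lemma term_nonneg (v0 : G.V) (μ : G.V → ℝ) (A : Finset G.V) (e : G.E) :
    0 ≤ Term G v0 μ A e := by
  have hge := nE_ge (G := G) v0 μ e
  have hlt := nE_lt (G := G) v0 μ e
  rw [Term]
  by_cases hin : cIn G v0 e ∈ A <;> by_cases hout : cOut G v0 e ∈ A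
  · rw [if_pos hin, if_pos hout, if_neg (by rw [xing_iff v0]; tauto)]
    norm_num
  · rw [if_pos hin, if_neg hout, if_pos ((xing_iff v0 A e).mpr (Or.inl ⟨hin, hout⟩))]
    linarith
  · rw [if_neg hin, if_pos hout, if_pos ((xing_iff v0 A e).mpr (Or.inr ⟨hout, hin⟩))]
    linarith
  · rw [if_neg hin, if_neg hout, if_neg (by rw [xing_iff v0]; tauto)]
    norm_num

lemma term_pos (v0 : G.V) (μ : G.V → ℝ) (A : Finset G.V) (e : G.E)
    (hout : cOut G v0 e ∈ A) (hin : cIn G v0 e ∉ A) : 0 < Term G v0 μ A e := by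
  have hlt := nE_lt (G := G) v0 μ e
  rw [Term, if_neg hin, if_pos hout,
    if_pos ((xing_iff v0 A e).mpr (Or.inr ⟨hout, hin⟩))]
  linarith

end TUQ
namespace TUQ
open Multigraph Finset

variable {G : Multigraph}

/-- `D0` is quasistable. -/
lemma D0_qs (htree : G.TreeLike) (v0 : G.V) {μ : G.V → ℝ} {d : ℤ}
    (hμ : G.IsPolarization μ d) : G.Quasistable μ v0 (D0 G v0 μ d) := by
  intro A hA
  have hb := beta_D0 htree v0 hμ A
  constructor
  · rw [hb]
    exact Finset.sum_nonneg fun e _ => term_nonneg v0 μ A e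
  · intro hv0A
    obtain ⟨w, -, hw⟩ := Finset.exists_of_ssubset hA
    have hpw := pw htree v0 A w
    rw [if_neg hw, if_pos hv0A] at hpw
    have hex : ∃ e ∈ NL G, Fe G v0 A w e < 0 := by
      by_contra hc
      push_neg at hc
      have := Finset.sum_nonneg hc
      linarith
    obtain ⟨e, heNL, he⟩ := hex
    have hz : (0 : ℝ) ≤ (if w ∈ Aside G v0 e then (1 : ℝ) else 0) := by split <;> norm_num
    rw [Fe] at he
    have hout : cOut G v0 e ∈ A ∧ cIn G v0 e ∉ A := by
      by_cases h1 : cIn G v0 e ∈ A <;> by_cases h2 : cOut G v0 e ∈ A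
      · rw [if_pos h1, if_pos h2] at he; norm_num at he
      · rw [if_pos h1, if_neg h2] at he; norm_num at he; linarith
      · exact ⟨h2, h1⟩
      · rw [if_neg h1, if_neg h2] at he; norm_num at he
    rw [hb]
    have hlt := Finset.sum_lt_sum (f := fun _ : G.E => (0 : ℝ))
      (fun i _ => term_nonneg v0 μ A i)
      ⟨e, heNL, term_pos v0 μ A e hout.1 hout.2⟩
    simpa using hlt

/-- Any quasistable divisor has the forced degree `nE` on each side. -/
lemma forced (htree : G.TreeLike) (v0 : G.V) {μ : G.V → ℝ} {d : ℤ}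
    (hμ : G.IsPolarization μ d) {D : G.V → ℤ} (hqs : G.Quasistable μ v0 D)
    (hdeg : G.deg D = d) {e : G.E} (heNL : e ∈ NL G) :
    ∑ v ∈ Aside G v0 e, D v = nE G v0 μ e := by
  have hspec := cIn_spec (v0 := v0) htree heNL
  set A := Aside G v0 e with hA
  have hδcard : (NL G).filter (Xing A) = {e} := by
    ext f
    simp only [Finset.mem_filter, Finset.mem_singleton]
    constructor
    · rintro ⟨hf, hx⟩
      by_contra hne
      rcases hx with ⟨h1, h2⟩ | ⟨h1, h2⟩
      · exact h2 (aside_closed hne (Or.inl ⟨rfl, rfl⟩) h1)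
      · exact h1 (aside_closed hne (Or.inr ⟨rfl, rfl⟩) h2)
    · rintro rfl
      exact ⟨heNL, (xing_iff v0 A f).mpr (Or.inl ⟨hspec.1, hspec.2⟩)⟩
  have hδ : G.delta A = 1 := by rw [delta_eq_card, hδcard, Finset.card_singleton]
  have hpropA : A ⊂ Finset.univ := by
    rw [Finset.ssubset_univ_iff]
    intro h
    exact not_v0_mem_Aside (G := G) (v0 := v0) (e0 := e) (by rw [← hA, h]; exact Finset.mem_univ v0)
  have hpropAc : Aᶜ ⊂ Finset.univ := by
    rw [Finset.ssubset_univ_iff]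
    intro h
    have hm : cIn G v0 e ∈ Aᶜ := by rw [h]; exact Finset.mem_univ _
    rw [Finset.mem_compl] at hm
    exact hm hspec.1
  have h1 := (hqs A hpropA).1
  have h2 := (hqs Aᶜ hpropAc).2 (Finset.mem_compl.mpr not_v0_mem_Aside)
  rw [beta, hδ] at h1
  rw [beta, delta_compl, hδ] at h2
  have hdeg' : ∑ v, (D v : ℝ) = (d : ℝ) := by
    rw [deg] at hdeg; exact_mod_cast congrArg (Int.cast : ℤ → ℝ) hdeg
  have hsD : ∑ v ∈ Aᶜ, (D v : ℝ) = (d : ℝ) - ∑ v ∈ A, (D v : ℝ) := by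
    have := Finset.sum_add_sum_compl A (fun v => (D v : ℝ))
    rw [hdeg'] at this
    linarith
  have hsμ : ∑ v ∈ Aᶜ, μ v = (d : ℝ) - ∑ v ∈ A, μ v := by
    have := Finset.sum_add_sum_compl A μ
    rw [hμ] at this
    linarith
  rw [hsD, hsμ] at h2
  have hge := nE_ge (G := G) v0 μ e
  have hlt := nE_lt (G := G) v0 μ e
  have hcast : ∑ v ∈ A, (D v : ℝ) = ((∑ v ∈ A, D v : ℤ) : ℝ) := by push_cast; rfl
  rw [hcast] at h1 h2
  norm_num at h1 h2
  have hb1 : ((∑ v ∈ A, D v : ℤ) : ℝ) < ((nE G v0 μ e : ℤ) : ℝ) + 1 := by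
    rw [← hA] at hge; linarith
  have hb2 : ((nE G v0 μ e : ℤ) : ℝ) < ((∑ v ∈ A, D v : ℤ) : ℝ) + 1 := by
    rw [← hA] at hlt; linarith
  have hi1 : (∑ v ∈ A, D v) < nE G v0 μ e + 1 := by exact_mod_cast hb1
  have hi2 : nE G v0 μ e < (∑ v ∈ A, D v) + 1 := by exact_mod_cast hb2
  omega

end TUQ

/-- On a finite connected tree-like multigraph there is exactly one
`(v0,μ)`-quasistable degree-`d` divisor. -/
theorem treelike_unique_quasistable (G : Multigraph) (htree : G.TreeLike)
    (d : ℤ) (μ : G.V → ℝ) (hμ : G.IsPolarization μ d) (v0 : G.V) :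
    ∃! D : G.V → ℤ, G.deg D = d ∧ G.Quasistable μ v0 D := by
  classical
  refine ⟨TUQ.D0 G v0 μ d, ⟨TUQ.deg_D0 v0 μ d, TUQ.D0_qs htree v0 hμ⟩, ?_⟩
  rintro D ⟨hdeg, hqs⟩
  funext v
  set D0 := TUQ.D0 G v0 μ d with hD0def
  have hforced : ∀ e ∈ TUQ.NL G,
      (∑ w ∈ TUQ.Aside G v0 e, ((D w : ℝ) - (D0 w : ℝ))) = 0 := by
    intro e he
    have hD := TUQ.forced htree v0 hμ hqs hdeg he
    have hD0 := TUQ.forced htree v0 hμ (TUQ.D0_qs htree v0 hμ)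
      (TUQ.deg_D0 v0 μ d) he
    rw [Finset.sum_sub_distrib, sub_eq_zero]
    exact_mod_cast hD.trans hD0.symm
  have hdeg0 : ∑ w, ((D w : ℝ) - (D0 w : ℝ)) = 0 := by
    rw [Finset.sum_sub_distrib, sub_eq_zero]
    have : G.deg D = G.deg D0 := hdeg.trans (TUQ.deg_D0 v0 μ d).symm
    rw [Multigraph.deg, Multigraph.deg] at this
    exact_mod_cast this
  have hid := TUQ.degid htree v0 (fun w => (D w : ℝ) - (D0 w : ℝ)) {v}
  rw [Finset.sum_singleton, hdeg0, mul_zero, zero_add] at hid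
  have hz : ∀ e ∈ TUQ.NL G,
      ((if TUQ.cIn G v0 e ∈ ({v} : Finset G.V) then (1 : ℝ) else 0) -
        (if TUQ.cOut G v0 e ∈ ({v} : Finset G.V) then (1 : ℝ) else 0)) *
        ∑ w ∈ TUQ.Aside G v0 e, ((D w : ℝ) - (D0 w : ℝ)) = 0 := by
    intro e he
    rw [hforced e he, mul_zero]
  rw [Finset.sum_congr rfl hz, Finset.sum_const_zero] at hid
  have : (D v : ℝ) = (D0 v : ℝ) := by linarith
  exact_mod_cast this
end
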